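/- arXiv:1811.12754 — 3 statements merged into one kernel-verified Lean document; each statement's English description precedes it below -/
import Mathlib

section
/- Let (E,ℒ,𝒜) be a weakly left-resolving, normal labelled space. Then Γ = {(ξ^{αγ}, |α|−|β|, η^{βγ}) ∈ T × ℤ × T : H_{[α]γ}(ξ^{αγ}) = H_{[β]γ}(η^{βγ})} is a groupoid with product (ξ,m,η)·(η,n,ρ) = (ξ,m+n,ρ) and inverse (ξ,m,η)^{−1} = (η,−m,ξ); in particular, Γ is closed under the product: if (ξ,m,η) ∈ Γ and (η,n,ρ) ∈ Γ, then (ξ,m+n,ρ) ∈ Γ. -/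
open Classical

universe u v w

/-! ## Words over an alphabet -/

/-- Finite-or-infinite words over the alphabet `A`: `Sum.inl l` is the finite word `l`
(with `[]` playing the role of the empty word `ω`), and `Sum.inr f` is the infinite word `f`. -/
abbrev Word (A : Type w) := List A ⊕ (ℕ → A)

/-- The length `|α| ∈ ℕ∞` of a word. -/
def wlength {A : Type w} : Word A → ℕ∞ :=
  Sum.elim (fun l => (l.length : ℕ∞)) fun _ => ⊤

/-- The finite prefix `α_{1,n}` of a word `α`. -/
def wprefix {A : Type w} : Word A → ℕ → List A :=
  Sum.elim (fun l n => l.take n) fun f n => List.ofFn fun i : Fin n => f i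

/-- Concatenation `αβ` of a finite word `α` with a word `β`. -/
def wappend {A : Type w} (α : List A) : Word A → Word A :=
  Sum.elim (fun l => Sum.inl (α ++ l)) fun f =>
    Sum.inr fun n => if h : n < α.length then α.get ⟨n, h⟩ else f (n - α.length)

/-- `β` is a beginning (finite prefix) of the word `α`. -/
def WPrefix {A : Type w} (β : List A) : Word A → Prop :=
  Sum.elim (fun l => β <+: l) fun f => β = List.ofFn fun i : Fin β.length => f i

/-! ## Triples -/

/-- Formal triples `(α, X, β)` together with a zero element; the inverse semigroup `S`
of a labelled space consists of such elements. -/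
inductive Tr (V : Type u) (A : Type w) where
  | zero : Tr V A
  | mk : List A → Set V → List A → Tr V A

/-- The involution `(α,A,β)* = (β,A,α)` (fixing `0`). -/
def Tr.tstar {V : Type u} {A : Type w} : Tr V A → Tr V A
  | .zero => .zero
  | .mk α X β => .mk β X α

/-! ## Labelled spaces -/

/-- The data of a labelled space `(E, ℒ, 𝒜)`: a directed graph on nonempty vertex/edge
sets, a surjective labelling map onto the alphabet `A`, and a family `𝒜` of subsets
of the vertex set. -/
structure LblSp (V : Type u) (E : Type v) (A : Type w) where
  src : E → V
  rng : E → V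
  lab : E → A
  lab_surj : Function.Surjective lab
  nonempty_V : Nonempty V
  nonempty_E : Nonempty E
  𝒜 : Set (Set V)

namespace LblSp

variable {V : Type u} {Ed : Type v} {A : Type w} (Λ : LblSp V Ed A)

/-- `α ≠ ω` is the label of some finite path of the graph. -/
def IsPathLabel (α : List A) : Prop :=
  ∃ l : List Ed, l ≠ [] ∧ List.Chain' (fun e f => Λ.rng e = Λ.src f) l ∧ l.map Λ.lab = α

/-- `ℒ^*`: the finite labelled paths, together with the empty word. -/
def LStar : Set (List A) := {α | α = [] ∨ Λ.IsPathLabel α}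

/-- `ℒ^∞`: the infinite labelled paths. -/
def LInfty : Set (ℕ → A) :=
  {f | ∃ e : ℕ → Ed, (∀ n, Λ.rng (e n) = Λ.src (e (n + 1))) ∧ ∀ n, Λ.lab (e n) = f n}

/-- `ℒ^{≤∞} = ℒ^* ∪ ℒ^∞`, as a predicate on `Word A`. -/
def IsWordW : Word A → Prop := Sum.elim (· ∈ Λ.LStar) (· ∈ Λ.LInfty)

/-- The relative range `r(X, α)` (with `r(X, ω) = X`). -/
noncomputable def relRange (X : Set V) (α : List A) : Set V :=
  if α = [] then X
  else {v | ∃ (l : List Ed) (h : l ≠ []), List.Chain' (fun e f => Λ.rng e = Λ.src f) l ∧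
        l.map Λ.lab = α ∧ Λ.src (l.head h) ∈ X ∧ Λ.rng (l.getLast h) = v}

/-- The range `r(α) = r(E⁰, α)`. -/
noncomputable def rangeL (α : List A) : Set V := Λ.relRange Set.univ α

/-- `𝒜^α = {X ∈ 𝒜 : X ⊆ r(α)}`. -/
noncomputable def Aset (α : List A) : Set (Set V) := {X | X ∈ Λ.𝒜 ∧ X ⊆ Λ.rangeL α}

/-- `(E, ℒ, 𝒜)` is a labelled space: `𝒜` is closed under finite intersections and
unions, contains all ranges `r(α)` for `α ∈ ℒ^{≥1}`, and is closed under relative ranges. -/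
structure IsLS : Prop where
  inter_mem : ∀ X ∈ Λ.𝒜, ∀ Y ∈ Λ.𝒜, X ∩ Y ∈ Λ.𝒜
  union_mem : ∀ X ∈ Λ.𝒜, ∀ Y ∈ Λ.𝒜, X ∪ Y ∈ Λ.𝒜
  range_mem : ∀ α ∈ Λ.LStar, α ≠ [] → Λ.rangeL α ∈ Λ.𝒜
  relRange_mem : ∀ X ∈ Λ.𝒜, ∀ α ∈ Λ.LStar, Λ.relRange X α ∈ Λ.𝒜

/-- A weakly left-resolving labelled space. -/
structure IsWLR : Prop where
  toIsLS : Λ.IsLS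
  wlr : ∀ X ∈ Λ.𝒜, ∀ Y ∈ Λ.𝒜, ∀ α ∈ Λ.LStar, α ≠ [] →
    Λ.relRange (X ∩ Y) α = Λ.relRange X α ∩ Λ.relRange Y α

/-- A weakly left-resolving normal labelled space. -/
structure IsNormal : Prop where
  toIsWLR : Λ.IsWLR
  sdiff_mem : ∀ X ∈ Λ.𝒜, ∀ Y ∈ Λ.𝒜, X \ Y ∈ Λ.𝒜

/-! ## The inverse semigroup `S` -/

/-- The underlying set of the inverse semigroup
`S = {(α,A,β) : α, β ∈ ℒ^*, A ∈ 𝒜^α ∩ 𝒜^β, A ≠ ∅} ∪ {0}`. -/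
def SSet : Set (Tr V A) :=
  {t | t = Tr.zero ∨ ∃ α X β, t = Tr.mk α X β ∧ α ∈ Λ.LStar ∧ β ∈ Λ.LStar ∧
    X ∈ Λ.Aset α ∧ X ∈ Λ.Aset β ∧ X.Nonempty}

/-- The semilattice of idempotents `E(S) = {(α,A,α)} ∪ {0}`. -/
def ESet : Set (Tr V A) :=
  {t | t = Tr.zero ∨ ∃ α X, t = Tr.mk α X α ∧ α ∈ Λ.LStar ∧ X ∈ Λ.Aset α ∧ X.Nonempty}

/-- The product of `S`. -/
noncomputable def tmul : Tr V A → Tr V A → Tr V A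
  | Tr.zero, _ => Tr.zero
  | Tr.mk _ _ _, Tr.zero => Tr.zero
  | Tr.mk α X β, Tr.mk γ Y δ =>
    if β <+: γ ∧ (Λ.relRange X (γ.drop β.length) ∩ Y).Nonempty then
      Tr.mk (α ++ γ.drop β.length) (Λ.relRange X (γ.drop β.length) ∩ Y) δ
    else if γ <+: β ∧ (X ∩ Λ.relRange Y (β.drop γ.length)).Nonempty then
      Tr.mk α (X ∩ Λ.relRange Y (β.drop γ.length)) (δ ++ β.drop γ.length)
    else Tr.zero

/-! ## Filters in `E(S)`, characters, and the tight spectrum -/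

/-- A filter in `E(S)`: a nonempty subset of `E(S) ∖ {0}` closed under products and
upward closed in the natural order (`p ≤ q ↔ pq = p`). -/
def IsFilterES (ξ : Set (Tr V A)) : Prop :=
  ξ.Nonempty ∧ (∀ t ∈ ξ, t ∈ Λ.ESet ∧ t ≠ Tr.zero) ∧
  (∀ p ∈ ξ, ∀ q ∈ ξ, Λ.tmul p q ∈ ξ) ∧
  (∀ p ∈ ξ, ∀ q ∈ Λ.ESet, Λ.tmul p q = p → q ∈ ξ)

/-- An ultrafilter in `E(S)`. -/
def IsUltraES (ξ : Set (Tr V A)) : Prop :=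
  Λ.IsFilterES ξ ∧ ∀ ζ, Λ.IsFilterES ζ → ξ ⊆ ζ → ξ = ζ

/-- The character (indicator function) of a filter. -/
noncomputable def charOf (_Λ : LblSp V Ed A) (ξ : Set (Tr V A)) : Tr V A → Bool :=
  fun t => if t ∈ ξ then true else false

/-- A character of `E(S)`: a nonzero, zero- and meet-preserving `{0,1}`-valued map on
`E(S)` (encoded as a map on triples vanishing outside `E(S)`). -/
def IsChar (φ : Tr V A → Bool) : Prop :=
  (∃ e, φ e = true) ∧ (∀ e, e ∉ Λ.ESet → φ e = false) ∧ φ Tr.zero = false ∧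
  ∀ e ∈ Λ.ESet, ∀ f ∈ Λ.ESet, φ (Λ.tmul e f) = (φ e && φ f)

/-- The tight spectrum `Ê_tight`: the closure, within the space of characters with the
topology of pointwise convergence, of the set of characters of ultrafilters. -/
def tightSpectrum : Set (Tr V A → Bool) :=
  {φ | Λ.IsChar φ} ∩ closure {φ | ∃ ξ, Λ.IsUltraES ξ ∧ φ = Λ.charOf ξ}

/-- A tight filter: a filter whose character lies in the tight spectrum. -/
def IsTightFilter (ξ : Set (Tr V A)) : Prop :=
  Λ.IsFilterES ξ ∧ Λ.charOf ξ ∈ Λ.tightSpectrum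

/-- `ξ_{|β|} = {B : (β, B, β) ∈ ξ}`, the filter of `ξ` at level `β`. -/
def filterAt (_Λ : LblSp V Ed A) (ξ : Set (Tr V A)) (β : List A) : Set (Set V) :=
  {B | Tr.mk β B β ∈ ξ}

/-- `α` is the word associated with the filter `ξ` (i.e. `ξ = ξ^α`): the nonempty finite
beginnings of `α` are exactly the words appearing in elements of `ξ`. -/
def HasWord (_Λ : LblSp V Ed A) (ξ : Set (Tr V A)) (α : Word A) : Prop :=
  ∀ β : List A, β ≠ [] → ((∃ B, Tr.mk β B β ∈ ξ) ↔ WPrefix β α)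

/-! ## Filters and ultrafilters in `𝒜^β` -/

/-- A filter in the Boolean algebra `𝒜^β`. -/
def IsFilterAset (β : List A) (F : Set (Set V)) : Prop :=
  F.Nonempty ∧ F ⊆ Λ.Aset β ∧ (∀ X ∈ F, X.Nonempty) ∧
  (∀ X ∈ F, ∀ Y ∈ F, X ∩ Y ∈ F) ∧ (∀ X ∈ F, ∀ Y ∈ Λ.Aset β, X ⊆ Y → Y ∈ F)

/-- An ultrafilter in `𝒜^β` (an element of `X_β`). -/
def IsUltraAset (β : List A) (F : Set (Set V)) : Prop :=
  Λ.IsFilterAset β F ∧ ∀ G, Λ.IsFilterAset β G → F ⊆ G → F = G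

/-- The gluing map `g_{(α)β}(F) = {C ∩ r(αβ) : C ∈ F}` on ultrafilters. -/
noncomputable def gmap (α β : List A) (F : Set (Set V)) : Set (Set V) :=
  {X | ∃ C ∈ F, X = C ∩ Λ.rangeL (α ++ β)}

/-- The cutting map `h_{[α]β}(F) = {C ∈ 𝒜^β : D ⊆ C for some D ∈ F}` on ultrafilters. -/
noncomputable def hmap (α β : List A) (F : Set (Set V)) : Set (Set V) :=
  {C | C ∈ Λ.Aset β ∧ ∃ D ∈ F, D ⊆ C}

/-! ## Cutting and gluing of (tight) filters in `E(S)` -/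

/-- The cutting map `H_{[α]β} : T^{αβ} → T^{(α)β}` (word-free formulation): the filter
whose family is `η_n = h_{[α]β_{1,n}}(ξ_{n+|α|})`; `H_{[ω]β}` is the identity. -/
noncomputable def Hcut (α : List A) (ξ : Set (Tr V A)) : Set (Tr V A) :=
  if α = [] then ξ
  else {t | ∃ δ B, t = Tr.mk δ B δ ∧ B ∈ Λ.Aset δ ∧
        ∃ D, Tr.mk (α ++ δ) D (α ++ δ) ∈ ξ ∧ D ⊆ B}

/-- The gluing map `G_{(α)β} : T^{(α)β} → T^{αβ}` (word-free formulation): the filter with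
family `η_{|α|+n} = g_{(α)β_{1,n}}(ξ_n)` for `n ≥ 1` and `η_i = f_{α_{1,i}[…]}(…)` for
`i ≤ |α|`, with the two cases according to whether the word of `ξ` is empty (`β = ω`)
or not; `G_{(ω)β}` is the identity. -/
noncomputable def Gglue (α : List A) (ξ : Set (Tr V A)) : Set (Tr V A) :=
  if α = [] then ξ
  else if ∃ (δ : List A) (B : Set V), δ ≠ [] ∧ Tr.mk δ B δ ∈ ξ then
    {t | ∃ δ B, t = Tr.mk δ B δ ∧
      ((α <+: δ ∧ α ≠ δ ∧ ∃ C, Tr.mk (δ.drop α.length) C (δ.drop α.length) ∈ ξ ∧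
          B = C ∩ Λ.rangeL δ) ∨
       (δ <+: α ∧ B ∈ Λ.Aset δ ∧ ∃ (b : A) (C : Set V), Tr.mk [b] C [b] ∈ ξ ∧
          Λ.relRange B (α.drop δ.length ++ [b]) = C ∩ Λ.rangeL (α ++ [b])))}
  else
    {t | ∃ δ B, t = Tr.mk δ B δ ∧ δ <+: α ∧ B ∈ Λ.Aset δ ∧
      ∃ C, Tr.mk [] C [] ∈ ξ ∧ Λ.relRange B (α.drop δ.length) = C ∩ Λ.rangeL α}

/-- `T^β`: the set of tight filters with associated word `β`. -/
def TWord (β : Word A) : Set (Set (Tr V A)) :=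
  {ξ | Λ.IsTightFilter ξ ∧ Λ.HasWord ξ β}

/-- `T^{(α)β} = {ξ ∈ T^β : r(α) ∈ ξ_0}` (equal to `T^β` when `α = ω`), the domain of the
gluing map `G_{(α)β}`. -/
def TGlueDom (α : List A) (β : Word A) : Set (Set (Tr V A)) :=
  {ξ | Λ.IsTightFilter ξ ∧ Λ.HasWord ξ β ∧ (α ≠ [] → Tr.mk [] (Λ.rangeL α) [] ∈ ξ)}

/-! ## The groupoid `Γ` -/

/-- The defining relation of
`Γ = {(ξ^{aγ}, |a|-|b|, η^{bγ}) ∈ T × ℤ × T : H_{[a]γ}(ξ^{aγ}) = H_{[b]γ}(η^{bγ})}`. -/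
def InGamma (η : Set (Tr V A)) (m : ℤ) (ξ : Set (Tr V A)) : Prop :=
  ∃ (a b : List A) (γ : Word A), a ∈ Λ.LStar ∧ b ∈ Λ.LStar ∧ Λ.IsWordW γ ∧
    η ∈ Λ.TWord (wappend a γ) ∧ ξ ∈ Λ.TWord (wappend b γ) ∧
    m = (a.length : ℤ) - (b.length : ℤ) ∧ Λ.Hcut a η = Λ.Hcut b ξ

/-- `Γ` as a set of raw triples. -/
def GammaRaw : Set (Set (Tr V A) × ℤ × Set (Tr V A)) :=
  {p | Λ.InGamma p.1 p.2.1 p.2.2}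

/-- The basic set `Z_{s,e:e₁,…,eₙ}` of `Γ` (raw version), for `s = (μ, X, ν)`:
triples `(η^{μγ}, |μ|-|ν|, ξ^{νγ}) ∈ Γ` with `e ∈ ξ`, `eᵢ ∉ ξ` and
`H_{[μ]γ}(η) = H_{[ν]γ}(ξ)`. -/
noncomputable def ZrawGen (μ ν : List A) (e : Tr V A) (es : List (Tr V A)) :
    Set (Set (Tr V A) × ℤ × Set (Tr V A)) :=
  {p | Λ.InGamma p.1 p.2.1 p.2.2 ∧ p.2.1 = (μ.length : ℤ) - (ν.length : ℤ) ∧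
       e ∈ p.2.2 ∧ (∀ f ∈ es, f ∉ p.2.2) ∧
       ∃ γ : Word A, Λ.HasWord p.1 (wappend μ γ) ∧ Λ.HasWord p.2.2 (wappend ν γ) ∧
         Λ.Hcut μ p.1 = Λ.Hcut ν p.2.2}

/-- `Z_s = Z_{s, s*s}` for `s = (μ, X, ν)` (raw version). -/
noncomputable def Zraw (μ : List A) (X : Set V) (ν : List A) :
    Set (Set (Tr V A) × ℤ × Set (Tr V A)) :=
  Λ.ZrawGen μ ν (Tr.mk ν X ν) []

/-- The basic set `V_{e:e₁,…,eₙ} = U_{e:e₁,…,eₙ} ∩ T` of the tight filter space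
(raw version). -/
def VrawGen (e : Tr V A) (es : List (Tr V A)) : Set (Set (Tr V A)) :=
  {ξ | Λ.IsTightFilter ξ ∧ e ∈ ξ ∧ ∀ f ∈ es, f ∉ ξ}

/-- The shift map `σ : T^{(1)} → T`, `σ(ξ^{aγ}) = H_{[a]γ}(ξ^{aγ})` (extended by the
identity off its domain). -/
noncomputable def sigmaMap (ξ : Set (Tr V A)) : Set (Tr V A) :=
  if h : ∃ a : A, ∃ B : Set V, Tr.mk [a] B [a] ∈ ξ then Λ.Hcut [h.choose] ξ else ξ

/-- The Renault–Deaconu basic set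
`𝒱(X, Y, m, n) = {(η, m-n, ξ) ∈ Γ : (η, ξ) ∈ X × Y, σ^m(η) = σ^n(ξ)}` (raw version). -/
noncomputable def VrdRaw (Xs Ys : Set (Set (Tr V A))) (m n : ℕ) :
    Set (Set (Tr V A) × ℤ × Set (Tr V A)) :=
  {p | Λ.InGamma p.1 p.2.1 p.2.2 ∧ p.2.1 = (m : ℤ) - (n : ℤ) ∧
       p.1 ∈ Xs ∧ p.2.2 ∈ Ys ∧ (Λ.sigmaMap)^[m] p.1 = (Λ.sigmaMap)^[n] p.2.2}

/-! ## The groupoid of germs `𝒢_tight` -/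

/-- The action `θ_s(φ)(e) = φ(s* e s)` of `S` on characters. -/
noncomputable def theta (s : Tr V A) (φ : Tr V A → Bool) : Tr V A → Bool :=
  fun e => if e ∈ Λ.ESet then φ (Λ.tmul (Λ.tmul (Tr.tstar s) e) s) else false

/-- `Ω = {(s, φ) ∈ S × Ê_tight : φ ∈ D_{s*s}}`. -/
noncomputable def Omega : Set (Tr V A × (Tr V A → Bool)) :=
  {p | p.1 ∈ Λ.SSet ∧ p.2 ∈ Λ.tightSpectrum ∧ p.2 (Λ.tmul (Tr.tstar p.1) p.1) = true}

/-- The germ equivalence relation on `Ω`: `(s,φ) ∼ (t,ψ)` iff `φ = ψ` and there is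
`e ∈ E(S)` with `φ(e) = 1` and `se = te`. -/
noncomputable def germEquiv (p q : Tr V A × (Tr V A → Bool)) : Prop :=
  p.2 = q.2 ∧ ∃ e ∈ Λ.ESet, p.2 e = true ∧ Λ.tmul p.1 e = Λ.tmul q.1 e

/-- The map `Φ` at the level of `Ω`: for `t = (β, X, γ)` and `φ` with filter `ξ^α`
(where `α = γα'`), `Φ[t,φ] = ((G_{(β)α'} ∘ H_{[γ]α'})(ξ^α), |β|-|γ|, ξ^α)`. -/
noncomputable def PhiRaw : Tr V A → (Tr V A → Bool) → Set (Tr V A) × ℤ × Set (Tr V A)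
  | Tr.zero, _ => (∅, 0, ∅)
  | Tr.mk β _ γ, φ =>
      (Λ.Gglue β (Λ.Hcut γ {e | φ e = true}), (β.length : ℤ) - (γ.length : ℤ),
        {e | φ e = true})

/-! ## Miscellaneous notions -/

/-- `ℒ(XE¹) = {ℒ(e) : e ∈ E¹, s(e) ∈ X}`. -/
def labE (X : Set V) : Set A := {a | ∃ e, Λ.lab e = a ∧ Λ.src e ∈ X}

/-- The set `E⁰_sink` of sinks. -/
def sinks : Set V := {v | ∀ e, Λ.src e ≠ v}

/-- The filter in `E(S)` associated with a pair (word, complete family). -/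
def pairFilter (_Λ : LblSp V Ed A) (α : Word A) (F : ℕ → Set (Set V)) : Set (Tr V A) :=
  {t | ∃ (n : ℕ) (B : Set V), (n : ℕ∞) ≤ wlength α ∧ B ∈ F n ∧
    t = Tr.mk (wprefix α n) B (wprefix α n)}

/-- A complete family for the word `α`: `F n` is a filter in `𝒜^{α_{1,n}}` for
`1 ≤ n ≤ |α|` (`F 0` is a filter in `𝒜` or empty, and a filter if `α = ω`), and
`F n = {X ∈ 𝒜^{α_{1,n}} : r(X, α_{n+1}) ∈ F (n+1)}` for all `n < |α|`. -/
noncomputable def IsCompleteFamily (α : Word A) (F : ℕ → Set (Set V)) : Prop :=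
  Λ.IsWordW α ∧
  (∀ n : ℕ, 1 ≤ n → (n : ℕ∞) ≤ wlength α → Λ.IsFilterAset (wprefix α n) (F n)) ∧
  (F 0 = ∅ ∨ Λ.IsFilterAset [] (F 0)) ∧
  (wlength α = 0 → Λ.IsFilterAset [] (F 0)) ∧
  (∀ n : ℕ, ((n + 1 : ℕ) : ℕ∞) ≤ wlength α →
    F n = {X | X ∈ Λ.Aset (wprefix α n) ∧
      Λ.relRange X ((wprefix α (n + 1)).drop n) ∈ F (n + 1)})

/-! ## The tight filter space `T` and the groupoid `Γ` as types -/

/-- The space `T` of tight filters. -/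
structure TightT where
  carrier : Set (Tr V A)
  tight : Λ.IsTightFilter carrier

/-- The topology of `T`, induced from pointwise convergence of characters. -/
noncomputable instance : TopologicalSpace Λ.TightT :=
  TopologicalSpace.induced (fun ξ => Λ.charOf ξ.carrier) inferInstance

/-- The groupoid `Γ ⊆ T × ℤ × T` as a type. -/
structure GammaT where
  fst : Λ.TightT
  mid : ℤ
  lst : Λ.TightT
  mem : Λ.InGamma fst.carrier mid lst.carrier

/-- The raw triple underlying an element of `Γ`. -/
def rawOf (p : Λ.GammaT) : Set (Tr V A) × ℤ × Set (Tr V A) :=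
  (p.fst.carrier, p.mid, p.lst.carrier)

/-- The collection of all sets `Z_{s,e:e₁,…,eₙ}` (for `s ∈ S`, `e, eᵢ ∈ E(S)`),
as subsets of `Γ`. -/
noncomputable def ZBasisT : Set (Set Λ.GammaT) :=
  {Z | ∃ (μ : List A) (X : Set V) (ν : List A) (e : Tr V A) (es : List (Tr V A)),
    Tr.mk μ X ν ∈ Λ.SSet ∧ e ∈ Λ.ESet ∧ (∀ f ∈ es, f ∈ Λ.ESet) ∧
    Z = {p : Λ.GammaT | Λ.rawOf p ∈ Λ.ZrawGen μ ν e es}}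

/-- The topology on `Γ` induced by the isomorphism `Φ` from the germ topology of
`𝒢_tight`, generated by the images of the basic sets `Θ(s, 𝒰)` with `𝒰 ⊆ D_{s*s}`
open in the tight spectrum. -/
noncomputable def PhiTopology : TopologicalSpace Λ.GammaT :=
  TopologicalSpace.generateFrom
    {Z | ∃ (s : Tr V A) (U : Set (Tr V A → Bool)), s ∈ Λ.SSet ∧
      (∃ W, IsOpen W ∧ U = W ∩ Λ.tightSpectrum) ∧
      (∀ φ ∈ U, φ (Λ.tmul (Tr.tstar s) s) = true) ∧
      Z = {p : Λ.GammaT | ∃ φ ∈ U, (s, φ) ∈ Λ.Omega ∧ Λ.PhiRaw s φ = Λ.rawOf p}}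

end LblSp

namespace LblSp

variable {V : Type u} {Ed : Type v} {A : Type w} (Λ : LblSp V Ed A)


/-! ### Auxiliary lemmas -/

lemma wprefix_ofFn (f : ℕ → A) (n : ℕ) :
    WPrefix (List.ofFn fun i : Fin n => f i) (Sum.inr f : Word A) := by
  show (List.ofFn fun i : Fin n => f i)
      = List.ofFn fun i : Fin (List.ofFn fun i : Fin n => f i).length => f i
  apply List.ext_get <;> simp

lemma word_eq_of_prefix_iff {w1 w2 : Word A}
    (h : ∀ β : List A, β ≠ [] → (WPrefix β w1 ↔ WPrefix β w2)) : w1 = w2 := by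
  have key : ∀ (l : List A) (f : ℕ → A),
      (∀ β : List A, β ≠ [] → (WPrefix β (Sum.inl l : Word A) ↔ WPrefix β (Sum.inr f : Word A))) →
      False := by
    intro l f h
    have hne : (List.ofFn fun i : Fin (l.length + 1) => f i) ≠ [] := by
      intro hβ; have := congrArg List.length hβ; simp at this
    have hp : (List.ofFn fun i : Fin (l.length + 1) => f i) <+: l :=
      (h _ hne).2 (wprefix_ofFn f (l.length + 1))
    have := hp.length_le
    simp at this
  cases w1 with
  | inl l1 =>
    cases w2 with
    | inl l2 =>
      rcases eq_or_ne l1 [] with rfl | h1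
      · rcases eq_or_ne l2 [] with rfl | h2
        · rfl
        · have : l2 <+: ([] : List A) := (h l2 h2).2 (List.prefix_refl l2)
          exact absurd (List.prefix_nil.mp this) h2
      · have h12 : l1 <+: l2 := (h l1 h1).1 (List.prefix_refl l1)
        have h2 : l2 ≠ [] := by
          rintro rfl; exact h1 (List.prefix_nil.mp h12)
        have h21 : l2 <+: l1 := (h l2 h2).2 (List.prefix_refl l2)
        exact congrArg Sum.inl (h12.eq_of_length_le h21.length_le)
    | inr f => exact absurd h (by intro h; exact key l1 f h)
  | inr f1 =>
    cases w2 with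
    | inl l2 =>
      exact absurd (fun β hβ => (h β hβ).symm) (by intro h; exact key l2 f1 h)
    | inr f2 =>
      refine congrArg Sum.inr (funext fun n => ?_)
      have hne : (List.ofFn fun i : Fin (n + 1) => f1 i) ≠ [] := by
        intro hβ; have := congrArg List.length hβ; simp at this
      have hp := (h _ hne).1 (wprefix_ofFn f1 (n + 1))
      have hthis := congrArg (fun l : List A => l[n]?) hp
      simp only [List.getElem?_ofFn, List.ofFnNthVal] at hthis
      rw [dif_pos (by omega), dif_pos (by simp)] at hthis
      simpa using hthis

lemma wprefix_prefix {w : Word A} {p q : List A} (hb : WPrefix p w) (hc : WPrefix q w)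
    (hlen : p.length ≤ q.length) : p <+: q := by
  cases w with
  | inl l => exact List.prefix_of_prefix_length_le hb hc hlen
  | inr f =>
    have hb' : p = List.ofFn fun i : Fin p.length => f i := hb
    have hc' : q = List.ofFn fun i : Fin q.length => f i := hc
    rw [List.prefix_iff_eq_take]
    apply List.ext_get
    · simp only [List.length_take]
      omega
    · intro i h1 h2
      have hib : i < p.length := h1
      have hic : i < q.length := by omega
      simp only [List.get_eq_getElem, List.getElem_take]
      have hbi : p[i]? = some (f i) := by
        conv_lhs => rw [hb']
        simp only [List.getElem?_ofFn, List.ofFnNthVal]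
        rw [dif_pos (by simpa using hib)]
      have hci : q[i]? = some (f i) := by
        conv_lhs => rw [hc']
        simp only [List.getElem?_ofFn, List.ofFnNthVal]
        rw [dif_pos (by simpa using hic)]
      have hbc := hbi.trans hci.symm
      rw [List.getElem?_eq_getElem hib, List.getElem?_eq_getElem hic] at hbc
      exact Option.some_injective _ hbc

lemma wappend_assoc (x y : List A) (w : Word A) :
    wappend (x ++ y) w = wappend x (wappend y w) := by
  cases w with
  | inl l => simp [wappend, List.append_assoc]
  | inr f =>
    simp only [wappend, Sum.elim_inr, Sum.inr.injEq]
    funext n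
    simp only [List.get_eq_getElem]
    rcases lt_or_ge n x.length with h1 | h1
    · rw [dif_pos (by simp; omega), dif_pos h1]
      exact List.getElem_append_left h1
    · rcases lt_or_ge n (x.length + y.length) with h2 | h2
      · rw [dif_pos (by simp; omega), dif_neg (by omega), dif_pos (by omega)]
        exact List.getElem_append_right h1
      · rw [dif_neg (by simp; omega), dif_neg (by omega), dif_neg (by omega)]
        congr 1
        rw [List.length_append]
        omega

lemma wappend_cancel {x : List A} {w1 w2 : Word A} (h : wappend x w1 = wappend x w2) :
    w1 = w2 := by
  cases w1 with
  | inl l1 =>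
    cases w2 with
    | inl l2 =>
      simp only [wappend, Sum.elim_inl, Sum.inl.injEq] at h
      exact congrArg Sum.inl (List.append_cancel_left h)
    | inr f2 => simp [wappend] at h
  | inr f1 =>
    cases w2 with
    | inl l2 => simp [wappend] at h
    | inr f2 =>
      simp only [wappend, Sum.elim_inr, Sum.inr.injEq] at h
      refine congrArg Sum.inr (funext fun n => ?_)
      have := congrFun h (x.length + n)
      rw [dif_neg (by omega), dif_neg (by omega)] at this
      simpa [Nat.add_sub_cancel_left] using this

lemma wprefix_wappend (x : List A) (w : Word A) : WPrefix x (wappend x w) := by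
  cases w with
  | inl l => exact List.prefix_append x l
  | inr f =>
    show x = List.ofFn fun i : Fin x.length => _
    apply List.ext_get
    · simp
    · intro i h1 h2
      simp only [List.get_eq_getElem, List.getElem_ofFn]
      rw [dif_pos h1]

lemma mem_LStar_suffix {x w : List A} (h : x ++ w ∈ Λ.LStar) : w ∈ Λ.LStar := by
  rcases eq_or_ne w [] with rfl | hw
  · exact Or.inl rfl
  rcases h with h | ⟨l, hl, hch, hmap⟩
  · exact absurd (List.append_eq_nil_iff.mp h).2 hw
  refine Or.inr ⟨l.drop x.length, ?_, hch.suffix (List.drop_suffix _ _), ?_⟩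
  · have hlen : l.length = x.length + w.length := by
      have := congrArg List.length hmap; simpa using this
    have hwl : 0 < w.length := List.length_pos_iff.mpr hw
    rw [← List.length_pos_iff, List.length_drop, hlen]
    omega
  · rw [List.map_drop, hmap, List.drop_left]

lemma rangeL_append_subset {x w : List A} (hw : w ≠ []) :
    Λ.rangeL (x ++ w) ⊆ Λ.rangeL w := by
  rcases eq_or_ne x [] with rfl | hx
  · simp
  intro v hv
  rw [rangeL, relRange, if_neg (by simp [hx])] at hv
  obtain ⟨l, hl, hch, hmap, -, hlast⟩ := hv
  rw [rangeL, relRange, if_neg hw]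
  have hlen : l.length = x.length + w.length := by
    have := congrArg List.length hmap; simpa using this
  have hwl : 0 < w.length := List.length_pos_iff.mpr hw
  have hd : l.drop x.length ≠ [] := by
    rw [← List.length_pos_iff, List.length_drop, hlen]
    omega
  refine ⟨l.drop x.length, hd, hch.suffix (List.drop_suffix _ _), ?_, trivial, ?_⟩
  · rw [List.map_drop, hmap, List.drop_left]
  · rw [← hlast]
    have h1 : (l.drop x.length).getLast? = l.getLast? := by
      conv_rhs => rw [← List.take_append_drop x.length l]
      rw [List.getLast?_append_of_ne_nil _ hd]
    have h2 := List.getLast?_eq_getLast hd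
    have h3 := List.getLast?_eq_getLast hl
    rw [h2, h3] at h1
    exact congrArg Λ.rng (Option.some_injective _ h1)

lemma mem_ESet_mk {α : List A} {X : Set V} (h : Tr.mk α X α ∈ Λ.ESet) :
    α ∈ Λ.LStar ∧ X ∈ Λ.Aset α := by
  rcases h with h | ⟨β, Y, hEq, hβ, hY, -⟩
  · exact absurd h (by simp)
  · injection hEq with h1 h2 h3
    subst h1; subst h2
    exact ⟨hβ, hY⟩

lemma hcut_comp (hLS : Λ.IsLS) {ξ : Set (Tr V A)} (hξ : ∀ t ∈ ξ, t ∈ Λ.ESet)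
    (x y : List A) : Λ.Hcut (x ++ y) ξ = Λ.Hcut y (Λ.Hcut x ξ) := by
  rcases eq_or_ne x [] with rfl | hx
  · simp [Hcut]
  rcases eq_or_ne y [] with rfl | hy
  · simp [Hcut, hx]
  have hxy : x ++ y ≠ [] := by simp [hx]
  rw [Hcut, if_neg hxy]
  conv_rhs => rw [Hcut, if_neg hy]
  ext t
  simp only [Set.mem_setOf_eq]
  constructor
  · rintro ⟨δ, B, rfl, hB, D, hD, hDB⟩
    obtain ⟨hLst, hDA⟩ := Λ.mem_ESet_mk (hξ _ hD)
    have hyδ : y ++ δ ≠ [] := by simp [hy]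
    have hLyδ : (y ++ δ) ∈ Λ.LStar := by
      apply Λ.mem_LStar_suffix (x := x)
      rw [← List.append_assoc]; exact hLst
    have hrng : Λ.rangeL (y ++ δ) ∈ Λ.𝒜 := hLS.range_mem _ hLyδ hyδ
    have hDsub : D ⊆ Λ.rangeL (y ++ δ) := by
      refine hDA.2.trans ?_
      rw [List.append_assoc]
      exact Λ.rangeL_append_subset (by simp [hy])
    refine ⟨δ, B, rfl, hB, B ∩ Λ.rangeL (y ++ δ), ?_, Set.inter_subset_left⟩
    rw [Hcut, if_neg hx]
    refine ⟨y ++ δ, B ∩ Λ.rangeL (y ++ δ), rfl,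
      ⟨hLS.inter_mem _ hB.1 _ hrng, Set.inter_subset_right⟩, D, ?_, ?_⟩
    · rw [← List.append_assoc]; exact hD
    · exact Set.subset_inter hDB hDsub
  · rintro ⟨δ, B, rfl, hB, D, hD, hDB⟩
    rw [Hcut, if_neg hx] at hD
    obtain ⟨δ', D', hEq, hD'A, D'', hD'', hsub⟩ := hD
    injection hEq with h1 h2 h3
    subst h1; subst h2
    refine ⟨δ, B, rfl, hB, D'', ?_, hsub.trans hDB⟩
    rw [List.append_assoc]; exact hD''

/-- For a weakly left-resolving normal labelled space,
`Γ = {(ξ^{αγ}, |α|-|β|, η^{βγ}) : H_{[α]γ}(ξ^{αγ}) = H_{[β]γ}(η^{βγ})}` is a groupoid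
under `(ξ,m,η)·(η,n,ρ) = (ξ,m+n,ρ)` and `(ξ,m,η)⁻¹ = (η,-m,ξ)`; in particular it is
closed under the product and under the inverse. -/
theorem statement_1 (hΛ : Λ.IsNormal) :
    (∀ (ξ : Set (Tr V A)) (m : ℤ) (η : Set (Tr V A)) (n : ℤ) (ρ : Set (Tr V A)),
      Λ.InGamma ξ m η → Λ.InGamma η n ρ → Λ.InGamma ξ (m + n) ρ) ∧
    (∀ (ξ : Set (Tr V A)) (m : ℤ) (η : Set (Tr V A)),
      Λ.InGamma ξ m η → Λ.InGamma η (-m) ξ) := by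
  have hLS := hΛ.toIsWLR.toIsLS
  constructor
  · rintro ξ m η n ρ ⟨a, b, γ, ha, hb, hγ, hξT, hηT, hm, hcut1⟩
      ⟨c, d, δ, hc, hd, hδ, hηT2, hρT, hn, hcut2⟩
    have hξfil : ∀ t ∈ ξ, t ∈ Λ.ESet := fun t ht => (hξT.1.1.2.1 t ht).1
    have hηfil : ∀ t ∈ η, t ∈ Λ.ESet := fun t ht => (hηT.1.1.2.1 t ht).1
    have hρfil : ∀ t ∈ ρ, t ∈ Λ.ESet := fun t ht => (hρT.1.1.2.1 t ht).1
    have hword : wappend b γ = wappend c δ :=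
      word_eq_of_prefix_iff fun β hβ => ((hηT.2 β hβ).symm.trans (hηT2.2 β hβ))
    subst hm; subst hn
    rcases le_total b.length c.length with hlen | hlen
    · have hcw : WPrefix c (wappend b γ) := by
        rw [hword]; exact wprefix_wappend c δ
      have hbc : b <+: c := wprefix_prefix (wprefix_wappend b γ) hcw hlen
      obtain ⟨e, rfl⟩ := hbc
      have hγe : γ = wappend e δ :=
        wappend_cancel (by rw [← wappend_assoc]; exact hword)
      have hξT' : ξ ∈ Λ.TWord (wappend (a ++ e) δ) := by
        rw [wappend_assoc, ← hγe]; exact hξT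
      refine ⟨a ++ e, d, δ, ?_, hd, hδ, hξT', hρT, ?_, ?_⟩
      · rcases eq_or_ne (a ++ e) [] with hae | hae
        · rw [hae]; exact Or.inl rfl
        · obtain ⟨B, hB⟩ := (hξT'.2 (a ++ e) hae).2 (wprefix_wappend (a ++ e) δ)
          exact (Λ.mem_ESet_mk (hξfil _ hB)).1
      · simp only [List.length_append, Nat.cast_add]
        ring
      · calc Λ.Hcut (a ++ e) ξ = Λ.Hcut e (Λ.Hcut a ξ) := Λ.hcut_comp hLS hξfil a e
          _ = Λ.Hcut e (Λ.Hcut b η) := by rw [hcut1]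
          _ = Λ.Hcut (b ++ e) η := (Λ.hcut_comp hLS hηfil b e).symm
          _ = Λ.Hcut d ρ := hcut2
    · have hcw : WPrefix c (wappend b γ) := by
        rw [hword]; exact wprefix_wappend c δ
      have hcb : c <+: b := wprefix_prefix hcw (wprefix_wappend b γ) hlen
      obtain ⟨e, rfl⟩ := hcb
      have hδe : δ = wappend e γ :=
        (wappend_cancel (by rw [← wappend_assoc]; exact hword)).symm
      have hρT' : ρ ∈ Λ.TWord (wappend (d ++ e) γ) := by
        rw [wappend_assoc, ← hδe]; exact hρT
      refine ⟨a, d ++ e, γ, ha, ?_, hγ, hξT, hρT', ?_, ?_⟩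
      · rcases eq_or_ne (d ++ e) [] with hde | hde
        · rw [hde]; exact Or.inl rfl
        · obtain ⟨B, hB⟩ := (hρT'.2 (d ++ e) hde).2 (wprefix_wappend (d ++ e) γ)
          exact (Λ.mem_ESet_mk (hρfil _ hB)).1
      · simp only [List.length_append, Nat.cast_add]
        ring
      · calc Λ.Hcut a ξ = Λ.Hcut (c ++ e) η := hcut1
          _ = Λ.Hcut e (Λ.Hcut c η) := Λ.hcut_comp hLS hηfil c e
          _ = Λ.Hcut e (Λ.Hcut d ρ) := by rw [hcut2]
          _ = Λ.Hcut (d ++ e) ρ := (Λ.hcut_comp hLS hρfil d e).symm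
  · rintro ξ m η ⟨a, b, γ, ha, hb, hγ, hξT, hηT, hm, hcut⟩
    exact ⟨b, a, γ, hb, ha, hγ, hηT, hξT, by rw [hm]; ring, hcut.symm⟩


end LblSp
end

section
/- Let (E,ℒ,𝒜) be a weakly left-resolving labelled space. Then the inverse semigroup S of the labelled space is E*-unitary: for every s ∈ S, if there exists an idempotent e ∈ E(S)∖{0} with e = se, then s ∈ E(S). -/
open Classical

universe u v w

namespace LblSp

variable {V : Type u} {Ed : Type v} {A : Type w} (Λ : LblSp V Ed A)

/-- In a weakly left-resolving labelled space, the inverse semigroup `S`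
is `E*`-unitary: if `s ∈ S` and there is a nonzero idempotent `e ∈ E(S)` with `e = se`,
then `s ∈ E(S)`. -/
theorem statement_3 (hΛ : Λ.IsWLR) :
    ∀ s ∈ Λ.SSet, ∀ e ∈ Λ.ESet, e ≠ Tr.zero → e = Λ.tmul s e → s ∈ Λ.ESet := by
  rintro s hs e he hne heq
  rcases hs with rfl | ⟨α, X, β, rfl, hα, hβ, hXα, hXβ, hXne⟩
  · simp only [tmul] at heq; exact absurd heq hne
  rcases he with rfl | ⟨γ, B, rfl, hγ, hBγ, hBne⟩
  · exact absurd rfl hne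
  simp only [tmul] at heq
  split_ifs at heq with h1 h2
  · -- β <+: γ, so γ = α ++ γ.drop β.length forces α = β
    rw [Tr.mk.injEq] at heq
    obtain ⟨h, -, -⟩ := heq
    have hlen : β.length ≤ γ.length := h1.1.length_le
    have hlen' : α.length = β.length := by
      have := congrArg List.length h
      simp [List.length_drop] at this
      omega
    have hαγ : α <+: γ := ⟨γ.drop β.length, h.symm⟩
    have hab : α = β := by
      rw [List.prefix_iff_eq_take] at hαγ h1
      rw [hαγ, h1.1, hlen']
    right
    exact ⟨β, X, by rw [hab], hβ, hXβ, hXne⟩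
  · -- γ <+: β, so γ = γ ++ β.drop γ.length forces β = γ = α
    rw [Tr.mk.injEq] at heq
    obtain ⟨h, -, h'⟩ := heq
    have hβγ : γ = β := by
      have hlen : β.length ≤ γ.length := by
        have := congrArg List.length h'
        rw [List.length_append, List.length_drop] at this
        omega
      exact h2.1.eq_of_length (le_antisymm h2.1.length_le hlen)
    right
    exact ⟨β, X, by rw [← h, hβγ], hβ, hXβ, hXne⟩

end LblSp
end

section
/- Let (E,ℒ,𝒜) be a weakly left-resolving, normal labelled space. Then: (i) T^{(1)} = {ξ^α ∈ T : |α| ≥ 1} is an open subset of T, and in fact T^{(1)} = ⋃_{a∈A} V_{(a,r(a),a)}; (ii) the map σ : T^{(1)} → T defined by σ(ξ^{aγ}) = H_{[a]γ}(ξ^{aγ}) is a local homeomorphism; more precisely, for each letter a ∈ A, σ restricted to V_{(a,r(a),a)} is a homeomorphism from V_{(a,r(a),a)} onto V_{(ω,r(a),ω)}. -/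
open Classical

universe u v w

namespace LblSp

variable {V : Type u} {Ed : Type v} {A : Type w} (Λ : LblSp V Ed A)

section AuxBasic

variable {Λ : LblSp V Ed A}

lemma relRange_nil (X : Set V) : Λ.relRange X [] = X := if_pos rfl

lemma mem_relRange {X : Set V} {u : List A} (hu : u ≠ []) {v : V} :
    v ∈ Λ.relRange X u ↔ ∃ (l : List Ed) (h : l ≠ []),
      List.Chain' (fun e f => Λ.rng e = Λ.src f) l ∧
      l.map Λ.lab = u ∧ Λ.src (l.head h) ∈ X ∧ Λ.rng (l.getLast h) = v := by
  rw [LblSp.relRange, if_neg hu]; exact Iff.rfl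

lemma relRange_mono {X Y : Set V} (h : X ⊆ Y) (u : List A) :
    Λ.relRange X u ⊆ Λ.relRange Y u := by
  rcases eq_or_ne u [] with rfl | hu
  · rw [relRange_nil, relRange_nil]; exact h
  · intro v hv
    rcases (mem_relRange hu).1 hv with ⟨l, hne, hch, hmap, hsrc, hrng⟩
    exact (mem_relRange hu).2 ⟨l, hne, hch, hmap, h hsrc, hrng⟩

lemma relRange_append (X : Set V) (u v : List A) :
    Λ.relRange X (u ++ v) = Λ.relRange (Λ.relRange X u) v := by
  rcases eq_or_ne u [] with rfl | hu
  · rw [List.nil_append, relRange_nil]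
  rcases eq_or_ne v [] with rfl | hv
  · rw [List.append_nil, relRange_nil]
  have huv : u ++ v ≠ [] := by simp [hu]
  ext w
  rw [mem_relRange huv, mem_relRange hv]
  constructor
  · rintro ⟨l, hne, hch, hmap, hsrc, hrng⟩
    set l₁ := l.take u.length with hl₁
    set l₂ := l.drop u.length with hl₂
    have hsplit : l₁ ++ l₂ = l := List.take_append_drop _ _
    have hmap1 : l₁.map Λ.lab = u := by
      rw [hl₁, List.map_take, hmap, List.take_left]
    have hmap2 : l₂.map Λ.lab = v := by
      rw [hl₂, List.map_drop, hmap, List.drop_left]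
    have hne1 : l₁ ≠ [] := by
      intro h; rw [h] at hmap1; exact hu (hmap1.symm)
    have hne2 : l₂ ≠ [] := by
      intro h; rw [h] at hmap2; exact hv (hmap2.symm)
    have hch' := hch
    rw [← hsplit, show List.Chain' _ (l₁ ++ l₂) ↔ _ from List.isChain_append] at hch'
    obtain ⟨hch1, hch2, hrel⟩ := hch'
    have hhead : l.head hne = l₁.head hne1 := by
      have h1 : l.head? = l₁.head? := by
        rw [← hsplit, List.head?_append_of_ne_nil _ hne1]
      rw [List.head?_eq_head hne, List.head?_eq_head hne1] at h1
      exact Option.some.inj h1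
    have hlast : l.getLast hne = l₂.getLast hne2 := by
      have h1 : l.getLast? = l₂.getLast? := by
        rw [← hsplit, List.getLast?_append_of_ne_nil _ hne2]
      rw [List.getLast?_eq_getLast hne, List.getLast?_eq_getLast hne2] at h1
      exact Option.some.inj h1
    refine ⟨l₂, hne2, hch2, hmap2, ?_, by rw [← hlast]; exact hrng⟩
    refine (mem_relRange hu).2 ⟨l₁, hne1, hch1, hmap1, by rw [← hhead]; exact hsrc, ?_⟩
    exact hrel _ (by simp [List.getLast?_eq_getLast hne1]) _ (by simp [List.head?_eq_head hne2])
  · rintro ⟨l₂, hne2, hch2, hmap2, hsrc2, hrng2⟩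
    rcases (mem_relRange hu).1 hsrc2 with ⟨l₁, hne1, hch1, hmap1, hsrc1, hrng1⟩
    have hne : l₁ ++ l₂ ≠ [] := by simp [hne1]
    refine ⟨l₁ ++ l₂, hne, ?_, by rw [List.map_append, hmap1, hmap2], ?_, ?_⟩
    · rw [show List.Chain' _ (l₁ ++ l₂) ↔ _ from List.isChain_append]
      refine ⟨hch1, hch2, ?_⟩
      intro x hx y hy
      rw [List.getLast?_eq_getLast hne1] at hx
      rw [List.head?_eq_head hne2] at hy
      cases Option.some.inj hx
      cases Option.some.inj hy
      exact hrng1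
    · have h1 : (l₁ ++ l₂).head? = l₁.head? := List.head?_append_of_ne_nil _ hne1
      rw [List.head?_eq_head hne, List.head?_eq_head hne1] at h1
      rw [Option.some.inj h1]; exact hsrc1
    · have h1 : (l₁ ++ l₂).getLast? = l₂.getLast? := List.getLast?_append_of_ne_nil _ hne2
      rw [List.getLast?_eq_getLast hne, List.getLast?_eq_getLast hne2] at h1
      rw [Option.some.inj h1]; exact hrng2

lemma rangeL_nil : Λ.rangeL [] = Set.univ := relRange_nil _

lemma relRange_subset_rangeL (X : Set V) (u : List A) :
    Λ.relRange X u ⊆ Λ.rangeL u :=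
  relRange_mono (Set.subset_univ X) u

lemma nonempty_of_relRange {X : Set V} {u : List A}
    (h : (Λ.relRange X u).Nonempty) : X.Nonempty := by
  rcases eq_or_ne u [] with rfl | hu
  · rwa [relRange_nil] at h
  · rcases h with ⟨v, hv⟩
    rcases (mem_relRange hu).1 hv with ⟨l, hne, _, _, hsrc, _⟩
    exact ⟨_, hsrc⟩

lemma isPathLabel_of_rangeL_nonempty {u : List A} (hu : u ≠ [])
    (h : (Λ.rangeL u).Nonempty) : Λ.IsPathLabel u := by
  rcases h with ⟨v, hv⟩
  rcases (mem_relRange hu).1 hv with ⟨l, hne, hch, hmap, _, _⟩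
  exact ⟨l, hne, hch, hmap⟩

lemma rangeL_nonempty_of_isPathLabel {u : List A} (h : Λ.IsPathLabel u) :
    (Λ.rangeL u).Nonempty := by
  rcases h with ⟨l, hne, hch, hmap⟩
  have hu : u ≠ [] := by rintro rfl; simp at hmap; exact hne hmap
  exact ⟨_, (mem_relRange hu).2 ⟨l, hne, hch, hmap, Set.mem_univ _, rfl⟩⟩

lemma rangeL_cons (a : A) (δ : List A) :
    Λ.rangeL (a :: δ) = Λ.relRange (Λ.rangeL [a]) δ := by
  have : (a :: δ) = [a] ++ δ := rfl
  rw [this, LblSp.rangeL, relRange_append]; rfl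

lemma isPathLabel_singleton (Λ : LblSp V Ed A) (a : A) : Λ.IsPathLabel [a] := by
  rcases Λ.lab_surj a with ⟨e, he⟩
  exact ⟨[e], by simp, List.isChain_singleton _, by simp [he]⟩

lemma singleton_mem_LStar (Λ : LblSp V Ed A) (a : A) : [a] ∈ Λ.LStar :=
  Or.inr (isPathLabel_singleton Λ a)

lemma nil_mem_LStar (Λ : LblSp V Ed A) : [] ∈ Λ.LStar := Or.inl rfl

lemma mem_LStar_of_nonempty {u : List A} (h : (Λ.rangeL u).Nonempty) :
    u ∈ Λ.LStar := by
  rcases eq_or_ne u [] with rfl | hu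
  · exact Or.inl rfl
  · exact Or.inr (isPathLabel_of_rangeL_nonempty hu h)

/-- A prefix of a word with nonempty range is in `ℒ^*`, with nonempty range. -/
lemma prefix_rangeL_nonempty {u w : List A} (hpre : u <+: w)
    (h : (Λ.rangeL w).Nonempty) : (Λ.rangeL u).Nonempty := by
  rcases hpre with ⟨d, rfl⟩
  rw [LblSp.rangeL, relRange_append] at h
  exact nonempty_of_relRange h

/-- A suffix of a word with nonempty range has nonempty range. -/
lemma suffix_rangeL_nonempty {u d : List A}
    (h : (Λ.rangeL (u ++ d)).Nonempty) : (Λ.rangeL d).Nonempty := by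
  rw [LblSp.rangeL, relRange_append] at h
  exact h.mono (relRange_subset_rangeL _ _)

end AuxBasic

section AuxSemigroup

variable {Λ : LblSp V Ed A}

lemma mk_mem_ESet_iff {β γ : List A} {B : Set V} :
    Tr.mk β B γ ∈ Λ.ESet ↔
      γ = β ∧ β ∈ Λ.LStar ∧ B ∈ Λ.𝒜 ∧ B ⊆ Λ.rangeL β ∧ B.Nonempty := by
  constructor
  · rintro (h | ⟨α, X, heq, hα, hX, hne⟩)
    · exact absurd h (fun h => by cases h)
    · injection heq with e1 e2 e3
      subst e1; subst e2; subst e3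
      exact ⟨rfl, hα, hX.1, hX.2, hne⟩
  · rintro ⟨rfl, h1, h2, h3, h4⟩
    exact Or.inr ⟨_, B, rfl, h1, ⟨h2, h3⟩, h4⟩

lemma mem_shape {ξ : Set (Tr V A)} (hξ : Λ.IsFilterES ξ) {t : Tr V A} (ht : t ∈ ξ) :
    ∃ β B, t = Tr.mk β B β ∧ β ∈ Λ.LStar ∧ B ∈ Λ.𝒜 ∧ B ⊆ Λ.rangeL β ∧ B.Nonempty := by
  obtain ⟨hE, hnz⟩ := hξ.2.1 t ht
  rcases hE with h | ⟨α, X, heq, hα, hX, hne⟩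
  · exact absurd h hnz
  · exact ⟨α, X, heq, hα, hX.1, hX.2, hne⟩

lemma mk_mem_shape {ξ : Set (Tr V A)} (hξ : Λ.IsFilterES ξ) {β B γ}
    (ht : Tr.mk β B γ ∈ ξ) :
    γ = β ∧ β ∈ Λ.LStar ∧ B ∈ Λ.𝒜 ∧ B ⊆ Λ.rangeL β ∧ B.Nonempty := by
  obtain ⟨β', B', heq, h1, h2, h3, h4⟩ := mem_shape hξ ht
  injection heq with e1 e2 e3
  subst e1; subst e2; subst e3
  exact ⟨rfl, h1, h2, h3, h4⟩

lemma tmul_def (α : List A) (X : Set V) (β γ : List A) (Y : Set V) (δ : List A) :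
    Λ.tmul (Tr.mk α X β) (Tr.mk γ Y δ) =
      if β <+: γ ∧ (Λ.relRange X (γ.drop β.length) ∩ Y).Nonempty then
        Tr.mk (α ++ γ.drop β.length) (Λ.relRange X (γ.drop β.length) ∩ Y) δ
      else if γ <+: β ∧ (X ∩ Λ.relRange Y (β.drop γ.length)).Nonempty then
        Tr.mk α (X ∩ Λ.relRange Y (β.drop γ.length)) (δ ++ β.drop γ.length)
      else Tr.zero := rfl

lemma tmul_eq_self {β : List A} {B : Set V} {γ : List A} {C : Set V}
    (hne : B.Nonempty) (hpre : γ <+: β)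
    (hsub : B ⊆ Λ.relRange C (β.drop γ.length)) :
    Λ.tmul (Tr.mk β B β) (Tr.mk γ C γ) = Tr.mk β B β := by
  rcases eq_or_ne β γ with rfl | hne'
  · rw [List.drop_length, relRange_nil] at hsub
    have hcond : β <+: β ∧ (Λ.relRange B (β.drop β.length) ∩ C).Nonempty := by
      rw [List.drop_length, relRange_nil, Set.inter_eq_left.2 hsub]
      exact ⟨List.prefix_refl _, hne⟩
    rw [tmul_def, if_pos hcond, List.drop_length, List.append_nil, relRange_nil,
      Set.inter_eq_left.2 hsub]
  · have hnp : ¬(β <+: γ ∧ (Λ.relRange B (γ.drop β.length) ∩ C).Nonempty) := by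
      rintro ⟨h, -⟩
      exact hne' (h.eq_of_length (le_antisymm h.length_le hpre.length_le))
    have hcond : γ <+: β ∧ (B ∩ Λ.relRange C (β.drop γ.length)).Nonempty := by
      rw [Set.inter_eq_left.2 hsub]; exact ⟨hpre, hne⟩
    rw [tmul_def, if_neg hnp, if_pos hcond, Set.inter_eq_left.2 hsub]
    congr 1
    obtain ⟨d, rfl⟩ := hpre
    rw [List.drop_left]

lemma le_of_tmul_eq_self {β : List A} {B : Set V} {γ : List A} {C : Set V}
    (h : Λ.tmul (Tr.mk β B β) (Tr.mk γ C γ) = Tr.mk β B β) :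
    γ <+: β ∧ B ⊆ Λ.relRange C (β.drop γ.length) := by
  rw [tmul_def] at h
  split_ifs at h with h1 h2
  · injection h with e1 e2 e3
    subst e3
    refine ⟨List.prefix_refl _, ?_⟩
    rw [List.drop_length, relRange_nil] at e2 ⊢
    exact Set.inter_eq_left.mp e2
  · injection h with e1 e2 e3
    exact ⟨h2.1, Set.inter_eq_left.mp e2⟩

lemma mem_of_le {ξ : Set (Tr V A)} (hξ : Λ.IsFilterES ξ) {β B γ C}
    (hp : Tr.mk β B β ∈ ξ)
    (hγ : γ ∈ Λ.LStar) (hC : C ∈ Λ.𝒜) (hCr : C ⊆ Λ.rangeL γ)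
    (hpre : γ <+: β) (hsub : B ⊆ Λ.relRange C (β.drop γ.length)) :
    Tr.mk γ C γ ∈ ξ := by
  obtain ⟨-, -, -, -, hBne⟩ := mk_mem_shape hξ hp
  have hCne : C.Nonempty := by
    rcases hBne with ⟨x, hx⟩
    exact nonempty_of_relRange ⟨x, hsub hx⟩
  exact hξ.2.2.2 _ hp _ (mk_mem_ESet_iff.2 ⟨rfl, hγ, hC, hCr, hCne⟩)
    (tmul_eq_self hBne hpre hsub)

lemma mem_of_superset {ξ : Set (Tr V A)} (hξ : Λ.IsFilterES ξ) {β B C}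
    (hp : Tr.mk β B β ∈ ξ) (hC : C ∈ Λ.𝒜) (hsub : B ⊆ C) (hCr : C ⊆ Λ.rangeL β) :
    Tr.mk β C β ∈ ξ := by
  obtain ⟨-, hβ, -, -, -⟩ := mk_mem_shape hξ hp
  refine mem_of_le hξ hp hβ hC hCr (List.prefix_refl _) ?_
  rw [List.drop_length, relRange_nil]
  exact hsub

lemma filt_prod {ξ : Set (Tr V A)} (hξ : Λ.IsFilterES ξ) {β B γ C}
    (hp : Tr.mk β B β ∈ ξ) (hq : Tr.mk γ C γ ∈ ξ) :
    (β <+: γ ∧ (Λ.relRange B (γ.drop β.length) ∩ C).Nonempty ∧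
      Tr.mk γ (Λ.relRange B (γ.drop β.length) ∩ C) γ ∈ ξ) ∨
    (γ <+: β ∧ γ ≠ β ∧ (B ∩ Λ.relRange C (β.drop γ.length)).Nonempty ∧
      Tr.mk β (B ∩ Λ.relRange C (β.drop γ.length)) β ∈ ξ) := by
  have hm := hξ.2.2.1 _ hp _ hq
  have hnz := (hξ.2.1 _ hm).2
  rw [tmul_def] at hm hnz
  split_ifs at hm hnz with h1 h2
  · left
    refine ⟨h1.1, h1.2, ?_⟩
    have he : β ++ γ.drop β.length = γ := by
      obtain ⟨d, rfl⟩ := h1.1; rw [List.drop_left]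
    rwa [he] at hm
  · right
    have hne : γ ≠ β := by
      rintro rfl
      apply h1
      refine ⟨List.prefix_refl _, ?_⟩
      rw [List.drop_length, relRange_nil]
      rw [List.drop_length, relRange_nil] at h2
      exact h2.2
    refine ⟨h2.1, hne, h2.2, ?_⟩
    have he : γ ++ β.drop γ.length = β := by
      obtain ⟨d, rfl⟩ := h2.1; rw [List.drop_left]
    rwa [he] at hm
  · exact absurd rfl hnz

end AuxSemigroup

section AuxHcut

variable {Λ : LblSp V Ed A}

lemma mem_Hcut_iff (hls : Λ.IsLS) {ξ : Set (Tr V A)} (hξ : Λ.IsFilterES ξ)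
    (a : A) {δ B δ'} :
    Tr.mk δ B δ' ∈ Λ.Hcut [a] ξ ↔
      δ' = δ ∧ B ∈ Λ.𝒜 ∧ B ⊆ Λ.rangeL δ ∧
      Tr.mk (a :: δ) (B ∩ Λ.rangeL (a :: δ)) (a :: δ) ∈ ξ := by
  rw [LblSp.Hcut, if_neg (by simp : ¬([a] : List A) = [])]
  constructor
  · rintro ⟨δ₀, B₀, heq, hB₀, D, hD, hDB⟩
    rw [Tr.mk.injEq] at heq
    obtain ⟨e1, e2, e3'⟩ := heq
    have e3 : δ' = δ := by rw [e3', ← e1]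
    rw [← e1] at hB₀ hD
    rw [← e2] at hB₀ hDB
    simp only [List.singleton_append] at hD
    obtain ⟨-, hw, -, hDr, -⟩ := mk_mem_shape hξ hD
    refine ⟨e3, hB₀.1, hB₀.2, ?_⟩
    have hr𝒜 : Λ.rangeL (a :: δ) ∈ Λ.𝒜 := hls.range_mem _ hw (by simp)
    exact mem_of_superset hξ hD (hls.inter_mem _ hB₀.1 _ hr𝒜)
      (fun x hx => ⟨hDB hx, hDr hx⟩) Set.inter_subset_right
  · rintro ⟨e3, hB𝒜, hBr, hmem⟩
    exact ⟨δ, B, by rw [e3], ⟨hB𝒜, hBr⟩, B ∩ Λ.rangeL (a :: δ),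
      by simpa [List.singleton_append] using hmem, Set.inter_subset_left⟩

lemma Hcut_shape {ξ : Set (Tr V A)} (a : A) {t : Tr V A} (ht : t ∈ Λ.Hcut [a] ξ) :
    ∃ δ B, t = Tr.mk δ B δ := by
  rw [LblSp.Hcut, if_neg (by simp : ¬([a] : List A) = [])] at ht
  obtain ⟨δ, B, heq, -⟩ := ht
  exact ⟨δ, B, heq⟩

lemma rangeL_singleton_mem (hls : Λ.IsLS) (a : A) : Λ.rangeL [a] ∈ Λ.𝒜 :=
  hls.range_mem _ (singleton_mem_LStar Λ a) (by simp)

lemma e0_mem_Hcut (hls : Λ.IsLS) {ξ : Set (Tr V A)} (hξ : Λ.IsFilterES ξ) {a : A}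
    (ha : Tr.mk [a] (Λ.rangeL [a]) [a] ∈ ξ) :
    Tr.mk [] (Λ.rangeL [a]) [] ∈ Λ.Hcut [a] ξ := by
  refine (mem_Hcut_iff hls hξ a).2 ⟨rfl, rangeL_singleton_mem hls a,
    by rw [rangeL_nil]; exact Set.subset_univ _, ?_⟩
  simpa [Set.inter_self] using ha

/-- `a :: δ ∈ ℒ^*` implies `δ ∈ ℒ^*` etc. -/
lemma cons_range_nonempty {a : A} {δ : List A} (h : a :: δ ∈ Λ.LStar) :
    (Λ.rangeL (a :: δ)).Nonempty := by
  rcases h with h | h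
  · exact absurd h (by simp)
  · exact rangeL_nonempty_of_isPathLabel h

lemma hcut_isFilter (hN : Λ.IsNormal) {ξ : Set (Tr V A)} (hξ : Λ.IsFilterES ξ)
    {a : A} (ha : Tr.mk [a] (Λ.rangeL [a]) [a] ∈ ξ) :
    Λ.IsFilterES (Λ.Hcut [a] ξ) := by
  have hls : Λ.IsLS := hN.toIsWLR.toIsLS
  refine ⟨⟨_, e0_mem_Hcut hls hξ ha⟩, ?_, ?_, ?_⟩
  · -- all members in ESet and nonzero
    intro t ht
    obtain ⟨δ, B, rfl⟩ := Hcut_shape a ht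
    obtain ⟨-, hB𝒜, hBr, hmem⟩ := (mem_Hcut_iff hls hξ a).1 ht
    obtain ⟨-, hw, -, -, hne⟩ := mk_mem_shape hξ hmem
    have hrne : (Λ.rangeL δ).Nonempty := by
      rcases hne with ⟨x, hx⟩
      exact ⟨x, (rangeL_cons a δ ▸ relRange_subset_rangeL _ δ) hx.2⟩
    have hBne : B.Nonempty := by
      rcases hne with ⟨x, hx⟩; exact ⟨x, hx.1⟩
    exact ⟨mk_mem_ESet_iff.2 ⟨rfl, mem_LStar_of_nonempty hrne, hB𝒜, hBr, hBne⟩,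
      fun h => by cases h⟩
  · -- closed under products
    intro p hp q hq
    obtain ⟨δ, B, rfl⟩ := Hcut_shape a hp
    obtain ⟨δ', B', rfl⟩ := Hcut_shape a hq
    obtain ⟨-, hB𝒜, hBr, hp'⟩ := (mem_Hcut_iff hls hξ a).1 hp
    obtain ⟨-, hB'𝒜, hB'r, hq'⟩ := (mem_Hcut_iff hls hξ a).1 hq
    rcases filt_prod hξ hp' hq' with ⟨hpre, hne, hmem⟩ | ⟨hpre, hneq, hne, hmem⟩
    · -- a::δ <+: a::δ'
      have hpre' : δ <+: δ' := (List.cons_prefix_cons.1 hpre).2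
      simp only [List.length_cons, List.drop_succ_cons] at hne hmem
      set d := δ'.drop δ.length with hd
      have hdd : δ ++ d = δ' := by
        obtain ⟨c, rfl⟩ := hpre'; rw [hd, List.drop_left]
      have hcond : δ <+: δ' ∧ (Λ.relRange B d ∩ B').Nonempty := by
        refine ⟨hpre', hne.mono ?_⟩
        exact Set.inter_subset_inter (relRange_mono Set.inter_subset_left _)
          Set.inter_subset_left
      rw [tmul_def, if_pos hcond, hdd]
      have hq'w : a :: δ' ∈ Λ.LStar := (mk_mem_shape hξ hq').2.1
      have hd' : (Λ.rangeL d).Nonempty := by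
        apply suffix_rangeL_nonempty (u := δ)
        rw [hdd]
        rcases cons_range_nonempty hq'w with ⟨x, hx⟩
        exact ⟨x, (rangeL_cons a δ' ▸ relRange_subset_rangeL _ δ') hx⟩
      refine (mem_Hcut_iff hls hξ a).2 ⟨rfl,
        hls.inter_mem _ (hls.relRange_mem _ hB𝒜 _ (mem_LStar_of_nonempty hd')) _ hB'𝒜,
        fun x hx => hB'r hx.2, ?_⟩
      refine mem_of_superset hξ hmem
        (hls.inter_mem _ (hls.inter_mem _ (hls.relRange_mem _ hB𝒜 _
          (mem_LStar_of_nonempty hd')) _ hB'𝒜) _ (hls.range_mem _ hq'w (by simp)))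
        ?_ Set.inter_subset_right
      intro x hx
      exact ⟨⟨relRange_mono Set.inter_subset_left _ hx.1, hx.2.1⟩, hx.2.2⟩
    · -- a::δ' <+: a::δ, strict
      have hpre' : δ' <+: δ := (List.cons_prefix_cons.1 hpre).2
      have hneq' : δ' ≠ δ := fun h => hneq (by rw [h])
      simp only [List.length_cons, List.drop_succ_cons] at hne hmem
      set d := δ.drop δ'.length with hd
      have hdd : δ' ++ d = δ := by
        obtain ⟨c, rfl⟩ := hpre'; rw [hd, List.drop_left]
      have hnc1 : ¬(δ <+: δ' ∧ (Λ.relRange B (δ'.drop δ.length) ∩ B').Nonempty) := by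
        rintro ⟨h, -⟩
        exact hneq' (h.eq_of_length (le_antisymm h.length_le hpre'.length_le)).symm
      have hcond : δ' <+: δ ∧ (B ∩ Λ.relRange B' d).Nonempty := by
        refine ⟨hpre', hne.mono ?_⟩
        exact Set.inter_subset_inter Set.inter_subset_left
          (relRange_mono Set.inter_subset_left _)
      rw [tmul_def, if_neg hnc1, if_pos hcond, hdd]
      have hp'w : a :: δ ∈ Λ.LStar := (mk_mem_shape hξ hp').2.1
      have hd' : (Λ.rangeL d).Nonempty := by
        apply suffix_rangeL_nonempty (u := δ')
        rw [hdd]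
        rcases cons_range_nonempty hp'w with ⟨x, hx⟩
        exact ⟨x, (rangeL_cons a δ ▸ relRange_subset_rangeL _ δ) hx⟩
      refine (mem_Hcut_iff hls hξ a).2 ⟨rfl,
        hls.inter_mem _ hB𝒜 _ (hls.relRange_mem _ hB'𝒜 _ (mem_LStar_of_nonempty hd')),
        fun x hx => hBr hx.1, ?_⟩
      refine mem_of_superset hξ hmem
        (hls.inter_mem _ (hls.inter_mem _ hB𝒜 _ (hls.relRange_mem _ hB'𝒜 _
          (mem_LStar_of_nonempty hd'))) _ (hls.range_mem _ hp'w (by simp)))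
        ?_ Set.inter_subset_right
      intro x hx
      exact ⟨⟨hx.1.1, relRange_mono Set.inter_subset_left _ hx.2⟩, hx.1.2⟩
  · -- upward closed
    intro p hp q hqE hpq
    obtain ⟨δ, B, rfl⟩ := Hcut_shape a hp
    obtain ⟨-, hB𝒜, hBr, hp'⟩ := (mem_Hcut_iff hls hξ a).1 hp
    rcases hqE with hq0 | ⟨γ, C, rfl, hγ, hC, hCne⟩
    · subst hq0
      exact absurd hpq (fun h => by change Tr.zero = _ at h; cases h)
    obtain ⟨hpre, hsub⟩ := le_of_tmul_eq_self hpq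
    set d := δ.drop γ.length with hd
    have hdd : γ ++ d = δ := by
      obtain ⟨c, rfl⟩ := hpre; rw [hd, List.drop_left]
    have hp'w : a :: δ ∈ Λ.LStar := (mk_mem_shape hξ hp').2.1
    have hrδ : (Λ.rangeL (a :: δ)).Nonempty := cons_range_nonempty hp'w
    have hrγ : (Λ.rangeL (a :: γ)).Nonempty := by
      refine prefix_rangeL_nonempty ?_ hrδ
      exact List.cons_prefix_cons.2 ⟨rfl, hpre⟩
    have hγw : a :: γ ∈ Λ.LStar := mem_LStar_of_nonempty hrγ
    have hrγ𝒜 : Λ.rangeL (a :: γ) ∈ Λ.𝒜 := hls.range_mem _ hγw (by simp)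
    have hrange_eq : Λ.rangeL (a :: δ) = Λ.relRange (Λ.rangeL (a :: γ)) d := by
      conv_lhs => rw [← hdd]
      rw [show (a :: (γ ++ d)) = (a :: γ) ++ d from rfl, LblSp.rangeL, relRange_append]
      rfl
    have hmain : B ∩ Λ.rangeL (a :: δ) ⊆
        Λ.relRange (C ∩ Λ.rangeL (a :: γ)) ((a :: δ).drop (a :: γ).length) := by
      simp only [List.length_cons, List.drop_succ_cons, ← hd]
      rcases eq_or_ne d [] with hdnil | hdne
      · rw [hdnil, relRange_nil]
        have : γ = δ := by rw [← hdd, hdnil, List.append_nil]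
        subst this
        intro x hx
        rw [hdnil, relRange_nil] at hsub
        exact ⟨hsub hx.1, hx.2⟩
      · have hdL : d ∈ Λ.LStar := by
          refine mem_LStar_of_nonempty (suffix_rangeL_nonempty (u := a :: γ) ?_)
          rwa [show (a :: γ) ++ d = a :: (γ ++ d) from rfl, hdd]
        rw [hN.toIsWLR.wlr _ hC.1 _ hrγ𝒜 _ hdL hdne]
        intro x hx
        exact ⟨hsub hx.1, hrange_eq ▸ hx.2⟩
    have hq' : Tr.mk (a :: γ) (C ∩ Λ.rangeL (a :: γ)) (a :: γ) ∈ ξ :=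
      mem_of_le hξ hp' hγw (hls.inter_mem _ hC.1 _ hrγ𝒜)
        Set.inter_subset_right (List.cons_prefix_cons.2 ⟨rfl, hpre⟩) hmain
    exact (mem_Hcut_iff hls hξ a).2 ⟨rfl, hC.1, hC.2, hq'⟩

end AuxHcut

/-- The inverse ("gluing") of the cutting map `H_{[a]}`, described explicitly. -/
def gluSet (Λ : LblSp V Ed A) (a : A) (η : Set (Tr V A)) : Set (Tr V A) :=
  {t | (∃ δ D, t = Tr.mk (a :: δ) D (a :: δ) ∧ Tr.mk δ D δ ∈ η ∧ D ⊆ Λ.rangeL (a :: δ)) ∨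
       (∃ B, t = Tr.mk [] B [] ∧ B ∈ Λ.𝒜 ∧ Tr.mk [] (Λ.relRange B [a]) [] ∈ η)}

section AuxGlu

variable {Λ : LblSp V Ed A}

lemma cons_mem_gluSet_iff {η : Set (Tr V A)} {a : A} {δ : List A} {D : Set V}
    {δ'' : List A} :
    Tr.mk (a :: δ) D δ'' ∈ Λ.gluSet a η ↔
      δ'' = a :: δ ∧ Tr.mk δ D δ ∈ η ∧ D ⊆ Λ.rangeL (a :: δ) := by
  constructor
  · rintro (⟨δ₀, D₀, heq, h1, h2⟩ | ⟨B, heq, -, -⟩)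
    · rw [Tr.mk.injEq] at heq
      obtain ⟨e1, e2, e3⟩ := heq
      have e1' : δ = δ₀ := by injection e1
      rw [← e1'] at h1 h2 e3
      rw [← e2] at h1 h2
      exact ⟨e3, h1, h2⟩
    · exact absurd (by injection heq) (List.cons_ne_nil a δ)
  · rintro ⟨e3, h1, h2⟩
    exact Or.inl ⟨δ, D, by rw [e3], h1, h2⟩

lemma nil_mem_gluSet_iff {η : Set (Tr V A)} {a : A} {B : Set V} {δ'' : List A} :
    Tr.mk [] B δ'' ∈ Λ.gluSet a η ↔
      δ'' = [] ∧ B ∈ Λ.𝒜 ∧ Tr.mk [] (Λ.relRange B [a]) [] ∈ η := by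
  constructor
  · rintro (⟨δ₀, D₀, heq, -, -⟩ | ⟨B₀, heq, h1, h2⟩)
    · exact absurd (by injection heq) (List.cons_ne_nil a δ₀).symm
    · rw [Tr.mk.injEq] at heq
      obtain ⟨-, e2, e3⟩ := heq
      rw [← e2] at h1 h2
      exact ⟨e3, h1, h2⟩
  · rintro ⟨e3, h1, h2⟩
    exact Or.inr ⟨B, by rw [e3], h1, h2⟩

lemma ea_mem_gluSet {η : Set (Tr V A)} {a : A}
    (h0 : Tr.mk [] (Λ.rangeL [a]) [] ∈ η) :
    Tr.mk [a] (Λ.rangeL [a]) [a] ∈ Λ.gluSet a η :=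
  Or.inl ⟨[], Λ.rangeL [a], rfl, h0, subset_rfl⟩

lemma relRange_cons_eq (B : Set V) (a : A) (δ : List A) :
    Λ.relRange B (a :: δ) = Λ.relRange (Λ.relRange B [a]) δ := by
  rw [show (a :: δ) = [a] ++ δ from rfl, relRange_append]

lemma glu_isFilter (hN : Λ.IsNormal) {η : Set (Tr V A)} (hη : Λ.IsFilterES η)
    {a : A} (h0 : Tr.mk [] (Λ.rangeL [a]) [] ∈ η) :
    Λ.IsFilterES (Λ.gluSet a η) := by
  have hls : Λ.IsLS := hN.toIsWLR.toIsLS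
  refine ⟨⟨_, ea_mem_gluSet h0⟩, ?_, ?_, ?_⟩
  · rintro t (⟨δ, D, rfl, h1, h2⟩ | ⟨B, rfl, h1, h2⟩)
    · obtain ⟨-, -, hD𝒜, -, hDne⟩ := mk_mem_shape hη h1
      refine ⟨mk_mem_ESet_iff.2 ⟨rfl, ?_, hD𝒜, h2, hDne⟩, fun h => by cases h⟩
      exact mem_LStar_of_nonempty (hDne.mono h2)
    · obtain ⟨-, -, -, -, hne⟩ := mk_mem_shape hη h2
      refine ⟨mk_mem_ESet_iff.2 ⟨rfl, nil_mem_LStar Λ, h1, by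
        rw [rangeL_nil]; exact Set.subset_univ _, nonempty_of_relRange hne⟩,
        fun h => by cases h⟩
  · rintro p (⟨δ, D, rfl, hp1, hp2⟩ | ⟨B, rfl, hp1, hp2⟩) q
      (⟨δ', D', rfl, hq1, hq2⟩ | ⟨B', rfl, hq1, hq2⟩)
    · -- cons-cons
      rcases filt_prod hη hp1 hq1 with ⟨hpre, hne, hmem⟩ | ⟨hpre, hneq, hne, hmem⟩
      · have hdd : δ ++ δ'.drop δ.length = δ' := by
          obtain ⟨c, rfl⟩ := hpre; rw [List.drop_left]
        have hcond : (a :: δ) <+: (a :: δ') ∧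
            (Λ.relRange D ((a :: δ').drop (a :: δ).length) ∩ D').Nonempty := by
          simp only [List.length_cons, List.drop_succ_cons]
          exact ⟨List.cons_prefix_cons.2 ⟨rfl, hpre⟩, hne⟩
        rw [tmul_def, if_pos hcond]
        simp only [List.length_cons, List.drop_succ_cons]
        rw [show (a :: δ) ++ δ'.drop δ.length = a :: δ' by rw [List.cons_append, hdd]]
        exact Or.inl ⟨δ', _, rfl, hmem, fun x hx => hq2 hx.2⟩
      · have hdd : δ' ++ δ.drop δ'.length = δ := by
          obtain ⟨c, rfl⟩ := hpre; rw [List.drop_left]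
        have hnc1 : ¬((a :: δ) <+: (a :: δ') ∧
            (Λ.relRange D ((a :: δ').drop (a :: δ).length) ∩ D').Nonempty) := by
          rintro ⟨h, -⟩
          have h' := (List.cons_prefix_cons.1 h).2
          exact hneq (hpre.eq_of_length (le_antisymm hpre.length_le h'.length_le))
        have hcond : (a :: δ') <+: (a :: δ) ∧
            (D ∩ Λ.relRange D' ((a :: δ).drop (a :: δ').length)).Nonempty := by
          simp only [List.length_cons, List.drop_succ_cons]
          exact ⟨List.cons_prefix_cons.2 ⟨rfl, hpre⟩, hne⟩
        rw [tmul_def, if_neg hnc1, if_pos hcond]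
        simp only [List.length_cons, List.drop_succ_cons]
        rw [show (a :: δ') ++ δ.drop δ'.length = a :: δ by rw [List.cons_append, hdd]]
        exact Or.inl ⟨δ, _, rfl, hmem, fun x hx => hp2 hx.1⟩
    · -- cons-nil
      have key : (D ∩ Λ.relRange (Λ.relRange B' [a]) δ).Nonempty ∧
          Tr.mk δ (D ∩ Λ.relRange (Λ.relRange B' [a]) δ) δ ∈ η := by
        rcases filt_prod hη hp1 hq2 with ⟨hpre, hne, hmem⟩ | ⟨-, -, hne, hmem⟩
        · obtain rfl := List.prefix_nil.1 hpre
          simp only [List.drop_nil, relRange_nil] at hne hmem ⊢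
          exact ⟨hne, hmem⟩
        · simp only [List.length_nil, List.drop_zero] at hne hmem
          exact ⟨hne, hmem⟩
      have hnc1 : ¬((a :: δ) <+: ([] : List A) ∧
          (Λ.relRange D (([] : List A).drop (a :: δ).length) ∩ B').Nonempty) := by
        rintro ⟨h, -⟩
        simpa using h.length_le
      have hre : Λ.relRange B' (a :: δ) = Λ.relRange (Λ.relRange B' [a]) δ :=
        relRange_cons_eq B' a δ
      have hcond : ([] : List A) <+: (a :: δ) ∧
          (D ∩ Λ.relRange B' ((a :: δ).drop ([] : List A).length)).Nonempty := by
        simp only [List.length_nil, List.drop_zero]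
        rw [hre]
        exact ⟨List.nil_prefix, key.1⟩
      rw [tmul_def, if_neg hnc1, if_pos hcond]
      simp only [List.length_nil, List.drop_zero, List.nil_append]
      rw [hre]
      exact Or.inl ⟨δ, _, rfl, key.2, fun x hx => hp2 hx.1⟩
    · -- nil-cons
      have key : (Λ.relRange (Λ.relRange B [a]) δ' ∩ D').Nonempty ∧
          Tr.mk δ' (Λ.relRange (Λ.relRange B [a]) δ' ∩ D') δ' ∈ η := by
        rcases filt_prod hη hp2 hq1 with ⟨-, hne, hmem⟩ | ⟨hpre, -, hne, hmem⟩
        · simp only [List.length_nil, List.drop_zero] at hne hmem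
          exact ⟨hne, hmem⟩
        · obtain rfl := List.prefix_nil.1 hpre
          simp only [List.drop_nil, relRange_nil] at hne hmem ⊢
          exact ⟨hne, hmem⟩
      have hre : Λ.relRange B (a :: δ') = Λ.relRange (Λ.relRange B [a]) δ' :=
        relRange_cons_eq B a δ'
      have hcond : ([] : List A) <+: (a :: δ') ∧
          (Λ.relRange B ((a :: δ').drop ([] : List A).length) ∩ D').Nonempty := by
        simp only [List.length_nil, List.drop_zero]
        rw [hre]
        exact ⟨List.nil_prefix, key.1⟩
      rw [tmul_def, if_pos hcond]
      simp only [List.length_nil, List.drop_zero, List.nil_append]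
      rw [hre]
      exact Or.inl ⟨δ', _, rfl, key.2, fun x hx => hq2 hx.2⟩
    · -- nil-nil
      have key : (Λ.relRange B [a] ∩ Λ.relRange B' [a]).Nonempty ∧
          Tr.mk [] (Λ.relRange B [a] ∩ Λ.relRange B' [a]) [] ∈ η := by
        rcases filt_prod hη hp2 hq2 with ⟨-, hne, hmem⟩ | ⟨-, hneq, -, -⟩
        · simp only [List.drop_nil, relRange_nil] at hne hmem
          exact ⟨hne, hmem⟩
        · exact absurd rfl hneq
      have hwlr : Λ.relRange (B ∩ B') [a] = Λ.relRange B [a] ∩ Λ.relRange B' [a] :=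
        hN.toIsWLR.wlr _ hp1 _ hq1 _ (singleton_mem_LStar Λ a) (by simp)
      have hcond : ([] : List A) <+: ([] : List A) ∧
          (Λ.relRange B (([] : List A).drop ([] : List A).length) ∩ B').Nonempty := by
        simp only [List.drop_nil, relRange_nil]
        have hBB' : (B ∩ B').Nonempty :=
          nonempty_of_relRange (u := [a]) (by rw [hwlr]; exact key.1)
        exact ⟨List.prefix_refl _, hBB'⟩
      rw [tmul_def, if_pos hcond]
      simp only [List.drop_nil, relRange_nil, List.nil_append]
      refine Or.inr ⟨B ∩ B', rfl, hls.inter_mem _ hp1 _ hq1, ?_⟩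
      rw [hwlr]
      exact key.2
  · -- upward closed
    rintro p (⟨δ, D, rfl, hp1, hp2⟩ | ⟨B, rfl, hp1, hp2⟩) q hqE hpq
    · rcases hqE with hq0 | ⟨γ, C, rfl, hγ, hC, hCne⟩
      · subst hq0
        exact absurd hpq (fun h => by change Tr.zero = _ at h; cases h)
      obtain ⟨hpre, hsub⟩ := le_of_tmul_eq_self hpq
      rcases γ with _ | ⟨b, γ'⟩
      · -- γ = []
        simp only [List.length_nil, List.drop_zero] at hsub
        rw [relRange_cons_eq] at hsub
        refine Or.inr ⟨C, rfl, hC.1, ?_⟩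
        refine mem_of_le hη hp1 (nil_mem_LStar Λ) (hls.relRange_mem _ hC.1 _
          (singleton_mem_LStar Λ a)) (by rw [rangeL_nil]; exact Set.subset_univ _)
          List.nil_prefix ?_
        simp only [List.length_nil, List.drop_zero]
        exact hsub
      · -- γ = b :: γ', with b = a
        obtain ⟨hb, hpre'⟩ := List.cons_prefix_cons.1 hpre
        rw [hb] at hC
        simp only [List.length_cons, List.drop_succ_cons] at hsub
        have hsub' : Λ.rangeL (a :: γ') ⊆ Λ.rangeL γ' := by
          rw [rangeL_cons]
          exact relRange_subset_rangeL _ _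
        refine Or.inl ⟨γ', C, by rw [hb], ?_, hC.2⟩
        exact mem_of_le hη hp1 (mem_LStar_of_nonempty ((hCne.mono hC.2).mono hsub'))
          hC.1 (fun x hx => hsub' (hC.2 hx)) hpre' hsub
    · rcases hqE with hq0 | ⟨γ, C, rfl, hγ, hC, hCne⟩
      · subst hq0
        exact absurd hpq (fun h => by change Tr.zero = _ at h; cases h)
      obtain ⟨hpre, hsub⟩ := le_of_tmul_eq_self hpq
      obtain rfl := List.prefix_nil.1 hpre
      simp only [List.drop_nil, relRange_nil] at hsub
      refine Or.inr ⟨C, rfl, hC.1, ?_⟩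
      exact mem_of_le hη hp2 (nil_mem_LStar Λ)
        (hls.relRange_mem _ hC.1 _ (singleton_mem_LStar Λ a))
        (by rw [rangeL_nil]; exact Set.subset_univ _) List.nil_prefix
        (by simp only [List.length_nil, List.drop_zero, List.drop_nil, relRange_nil]
            exact relRange_mono hsub _)

end AuxGlu

section AuxInv

variable {Λ : LblSp V Ed A}

lemma Hcut_mono {a : A} {ξ ζ : Set (Tr V A)} (h : ξ ⊆ ζ) :
    Λ.Hcut [a] ξ ⊆ Λ.Hcut [a] ζ := by
  intro t ht
  rw [LblSp.Hcut, if_neg (by simp : ¬([a] : List A) = [])] at ht ⊢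
  obtain ⟨δ, B, rfl, hB, D, hD, hDB⟩ := ht
  exact ⟨δ, B, rfl, hB, D, h hD, hDB⟩

lemma gluSet_mono {a : A} {η ζ : Set (Tr V A)} (h : η ⊆ ζ) :
    Λ.gluSet a η ⊆ Λ.gluSet a ζ := by
  rintro t (⟨δ, D, rfl, h1, h2⟩ | ⟨B, rfl, h1, h2⟩)
  · exact Or.inl ⟨δ, D, rfl, h h1, h2⟩
  · exact Or.inr ⟨B, rfl, h1, h h2⟩

lemma hcut_glu (hN : Λ.IsNormal) {η : Set (Tr V A)} (hη : Λ.IsFilterES η)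
    {a : A} (h0 : Tr.mk [] (Λ.rangeL [a]) [] ∈ η) :
    Λ.Hcut [a] (Λ.gluSet a η) = η := by
  have hls : Λ.IsLS := hN.toIsWLR.toIsLS
  have hG : Λ.IsFilterES (Λ.gluSet a η) := glu_isFilter hN hη h0
  ext t
  constructor
  · intro ht
    obtain ⟨δ, B, rfl⟩ := Hcut_shape a ht
    obtain ⟨-, hB𝒜, hBr, hmem⟩ := (mem_Hcut_iff hls hG a).1 ht
    obtain ⟨-, hmem', -⟩ := cons_mem_gluSet_iff.1 hmem
    exact mem_of_superset hη hmem' hB𝒜 Set.inter_subset_left hBr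
  · intro ht
    obtain ⟨δ, B, rfl, hδ, hB𝒜, hBr, hBne⟩ := mem_shape hη ht
    have hkey : Tr.mk δ (B ∩ Λ.rangeL (a :: δ)) δ ∈ η := by
      rcases filt_prod hη h0 ht with ⟨-, -, hmem⟩ | ⟨hpre, hneq, -, -⟩
      · simp only [List.length_nil, List.drop_zero] at hmem
        rw [← rangeL_cons, Set.inter_comm] at hmem
        exact hmem
      · exact absurd (List.prefix_nil.1 hpre) hneq
    refine (mem_Hcut_iff hls hG a).2 ⟨rfl, hB𝒜, hBr, ?_⟩
    refine cons_mem_gluSet_iff.2 ⟨rfl, hkey, Set.inter_subset_right⟩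
  -- end
lemma glu_hcut (hN : Λ.IsNormal) {ξ : Set (Tr V A)} (hξ : Λ.IsFilterES ξ)
    {a : A} (ha : Tr.mk [a] (Λ.rangeL [a]) [a] ∈ ξ) :
    Λ.gluSet a (Λ.Hcut [a] ξ) = ξ := by
  have hls : Λ.IsLS := hN.toIsWLR.toIsLS
  ext t
  constructor
  · rintro (⟨δ, D, rfl, h1, h2⟩ | ⟨B, rfl, h1, h2⟩)
    · obtain ⟨-, hD𝒜, hDr, hmem⟩ := (mem_Hcut_iff hls hξ a).1 h1
      rwa [Set.inter_eq_left.2 h2] at hmem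
    · obtain ⟨-, -, -, hmem⟩ := (mem_Hcut_iff hls hξ a).1 h2
      refine mem_of_le hξ hmem (nil_mem_LStar Λ) h1
        (by rw [rangeL_nil]; exact Set.subset_univ _) List.nil_prefix ?_
      simp only [List.length_nil, List.drop_zero]
      exact fun x hx => hx.1
  · intro ht
    obtain ⟨β, B, rfl, hβ, hB𝒜, hBr, hBne⟩ := mem_shape hξ ht
    rcases β with _ | ⟨b, δ⟩
    · refine Or.inr ⟨B, rfl, hB𝒜, ?_⟩
      have hkey : Tr.mk [a] (Λ.relRange B [a] ∩ Λ.rangeL [a]) [a] ∈ ξ := by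
        rcases filt_prod hξ ht ha with ⟨-, -, hmem⟩ | ⟨hpre, -, -, -⟩
        · simpa only [List.length_nil, List.drop_zero] using hmem
        · exact absurd hpre.length_le (by simp)
      refine (mem_Hcut_iff hls hξ a).2 ⟨rfl, hls.relRange_mem _ hB𝒜 _
        (singleton_mem_LStar Λ a), by rw [rangeL_nil]; exact Set.subset_univ _, ?_⟩
      have h1 : Λ.rangeL (a :: ([] : List A)) = Λ.rangeL [a] := rfl
      have h2 : Λ.relRange B [a] ∩ Λ.rangeL [a] ⊆ Λ.relRange B [a] :=
        Set.inter_subset_left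
      exact hkey
    · -- word b :: δ; necessarily b = a
      have hb : a = b := by
        rcases filt_prod hξ ha ht with ⟨hpre, -, -⟩ | ⟨hpre, hneq, -, -⟩
        · exact (List.cons_prefix_cons.1 hpre).1
        · have hlen : δ.length = 0 := by
            have := hpre.length_le
            simp only [List.length_cons, List.length_nil] at this
            omega
          obtain rfl := List.length_eq_zero_iff.1 hlen
          exact absurd (List.cons_prefix_cons.1 hpre).1.symm
            (fun h => hneq (by rw [h]))
      rw [← hb] at ht hBr hβ ⊢
      refine Or.inl ⟨δ, B, rfl, ?_, hBr⟩
      refine (mem_Hcut_iff hls hξ a).2 ⟨rfl, hB𝒜, ?_, ?_⟩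
      · intro x hx
        exact (rangeL_cons a δ ▸ relRange_subset_rangeL _ δ) (hBr hx)
      · rwa [Set.inter_eq_left.2 hBr]

lemma hcut_isUltra (hN : Λ.IsNormal) {ξ : Set (Tr V A)} (hu : Λ.IsUltraES ξ)
    {a : A} (ha : Tr.mk [a] (Λ.rangeL [a]) [a] ∈ ξ) :
    Λ.IsUltraES (Λ.Hcut [a] ξ) := by
  have hls : Λ.IsLS := hN.toIsWLR.toIsLS
  refine ⟨hcut_isFilter hN hu.1 ha, ?_⟩
  intro ζ hζ hsub
  have h0ζ : Tr.mk [] (Λ.rangeL [a]) [] ∈ ζ := hsub (e0_mem_Hcut hls hu.1 ha)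
  have heq : ξ = Λ.gluSet a ζ := by
    refine hu.2 _ (glu_isFilter hN hζ h0ζ) ?_
    rw [← glu_hcut hN hu.1 ha]
    exact gluSet_mono hsub
  rw [heq, hcut_glu hN hζ h0ζ]

lemma glu_isUltra (hN : Λ.IsNormal) {η : Set (Tr V A)} (hu : Λ.IsUltraES η)
    {a : A} (h0 : Tr.mk [] (Λ.rangeL [a]) [] ∈ η) :
    Λ.IsUltraES (Λ.gluSet a η) := by
  refine ⟨glu_isFilter hN hu.1 h0, ?_⟩
  intro ζ hζ hsub
  have haζ : Tr.mk [a] (Λ.rangeL [a]) [a] ∈ ζ := hsub (ea_mem_gluSet h0)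
  have heq : η = Λ.Hcut [a] ζ := by
    refine hu.2 _ (hcut_isFilter hN hζ haζ) ?_
    rw [← hcut_glu hN hu.1 h0]
    exact Hcut_mono hsub
  rw [heq, glu_hcut hN hζ haζ]

end AuxInv

/-- The cutting map at the level of characters. -/
noncomputable def PhiTgt (Λ : LblSp V Ed A) (a : A) : Tr V A → Option (Tr V A)
  | Tr.zero => none
  | Tr.mk δ B δ'' =>
      if δ'' = δ ∧ B ∈ Λ.𝒜 ∧ B ⊆ Λ.rangeL δ then
        some (Tr.mk (a :: δ) (B ∩ Λ.rangeL (a :: δ)) (a :: δ))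
      else none

noncomputable def PhiMap (Λ : LblSp V Ed A) (a : A) (φ : Tr V A → Bool) :
    Tr V A → Bool :=
  fun t => ((Λ.PhiTgt a t).map φ).getD false

/-- The gluing map at the level of characters. -/
noncomputable def PsiTgt (Λ : LblSp V Ed A) (a : A) : Tr V A → Option (Tr V A)
  | Tr.zero => none
  | Tr.mk [] B δ'' =>
      if δ'' = [] ∧ B ∈ Λ.𝒜 then some (Tr.mk [] (Λ.relRange B [a]) []) else none
  | Tr.mk (b :: δ) D δ'' =>
      if b = a ∧ δ'' = b :: δ ∧ D ⊆ Λ.rangeL (a :: δ) then some (Tr.mk δ D δ)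
      else none

noncomputable def PsiMap (Λ : LblSp V Ed A) (a : A) (φ : Tr V A → Bool) :
    Tr V A → Bool :=
  fun t => ((Λ.PsiTgt a t).map φ).getD false

section AuxChar

variable {Λ : LblSp V Ed A}

lemma charOf_eq_true {ξ : Set (Tr V A)} {t : Tr V A} :
    Λ.charOf ξ t = true ↔ t ∈ ξ := by
  by_cases h : t ∈ ξ <;> simp [LblSp.charOf, h]

lemma zero_not_mem {ξ : Set (Tr V A)} (hξ : Λ.IsFilterES ξ) : Tr.zero ∉ ξ :=
  fun h => (hξ.2.1 _ h).2 rfl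

lemma mem_of_tmul_mem {ξ : Set (Tr V A)} (hξ : Λ.IsFilterES ξ) {e f : Tr V A}
    (he : e ∈ Λ.ESet) (hf : f ∈ Λ.ESet) (h : Λ.tmul e f ∈ ξ) : e ∈ ξ ∧ f ∈ ξ := by
  rcases he with rfl | ⟨β, B, rfl, hβ, hB, hBne⟩
  · exact absurd h (by
      have : Λ.tmul Tr.zero f = Tr.zero := rfl
      rw [this]; exact zero_not_mem hξ)
  rcases hf with rfl | ⟨γ, C, rfl, hγ, hC, hCne⟩
  · exact absurd h (by
      have : Λ.tmul (Tr.mk β B β) Tr.zero = Tr.zero := rfl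
      rw [this]; exact zero_not_mem hξ)
  rw [tmul_def] at h
  split_ifs at h with h1 h2
  · have hdd : β ++ γ.drop β.length = γ := by
      obtain ⟨d, rfl⟩ := h1.1; rw [List.drop_left]
    rw [hdd] at h
    constructor
    · exact mem_of_le hξ h hβ hB.1 hB.2 h1.1 Set.inter_subset_left
    · refine mem_of_le hξ h hγ hC.1 hC.2 (List.prefix_refl _) ?_
      rw [List.drop_length, relRange_nil]
      exact Set.inter_subset_right
  · have hdd : γ ++ β.drop γ.length = β := by
      obtain ⟨d, rfl⟩ := h2.1; rw [List.drop_left]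
    rw [hdd] at h
    constructor
    · refine mem_of_le hξ h hβ hB.1 hB.2 (List.prefix_refl _) ?_
      rw [List.drop_length, relRange_nil]
      exact Set.inter_subset_left
    · exact mem_of_le hξ h hγ hC.1 hC.2 h2.1 Set.inter_subset_right
  · exact absurd h (zero_not_mem hξ)

lemma isChar_charOf {ξ : Set (Tr V A)} (hξ : Λ.IsFilterES ξ) :
    Λ.IsChar (Λ.charOf ξ) := by
  refine ⟨?_, ?_, ?_, ?_⟩
  · obtain ⟨t, ht⟩ := hξ.1
    exact ⟨t, charOf_eq_true.2 ht⟩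
  · intro e he
    by_contra h
    have : e ∈ ξ := charOf_eq_true.1 (by
      cases hb : Λ.charOf ξ e
      · exact absurd hb h
      · rfl)
    exact he (hξ.2.1 _ this).1
  · have : Tr.zero ∉ ξ := zero_not_mem hξ
    simp [LblSp.charOf, this]
  · intro e he f hf
    by_cases he' : e ∈ ξ <;> by_cases hf' : f ∈ ξ
    · have := hξ.2.2.1 _ he' _ hf'
      simp [LblSp.charOf, this, he', hf']
    · have : Λ.tmul e f ∉ ξ := fun h => hf' (mem_of_tmul_mem hξ he hf h).2
      simp [LblSp.charOf, this, he', hf']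
    · have : Λ.tmul e f ∉ ξ := fun h => he' (mem_of_tmul_mem hξ he hf h).1
      simp [LblSp.charOf, this, he', hf']
    · have : Λ.tmul e f ∉ ξ := fun h => he' (mem_of_tmul_mem hξ he hf h).1
      simp [LblSp.charOf, this, he', hf']

lemma zero_not_mem_Hcut {ξ : Set (Tr V A)} {a : A} : Tr.zero ∉ Λ.Hcut [a] ξ := by
  intro h
  obtain ⟨δ, B, heq⟩ := Hcut_shape a h
  cases heq

lemma charOf_Hcut (hls : Λ.IsLS) {ξ : Set (Tr V A)} (hξ : Λ.IsFilterES ξ) (a : A) :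
    Λ.charOf (Λ.Hcut [a] ξ) = Λ.PhiMap a (Λ.charOf ξ) := by
  funext t
  cases t with
  | zero =>
    have : Tr.zero ∉ Λ.Hcut [a] ξ := zero_not_mem_Hcut
    simp [LblSp.charOf, LblSp.PhiMap, LblSp.PhiTgt, this]
  | mk δ B δ'' =>
    by_cases hcond : δ'' = δ ∧ B ∈ Λ.𝒜 ∧ B ⊆ Λ.rangeL δ
    · have hiff : (Tr.mk δ B δ'' ∈ Λ.Hcut [a] ξ) ↔
          (Tr.mk (a :: δ) (B ∩ Λ.rangeL (a :: δ)) (a :: δ) ∈ ξ) := by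
        rw [mem_Hcut_iff hls hξ a]
        exact ⟨fun h => h.2.2.2, fun h => ⟨hcond.1, hcond.2.1, hcond.2.2, h⟩⟩
      simp only [LblSp.PhiMap, LblSp.PhiTgt, if_pos hcond, Option.map_some,
        Option.getD_some, LblSp.charOf]
      by_cases hm : Tr.mk (a :: δ) (B ∩ Λ.rangeL (a :: δ)) (a :: δ) ∈ ξ
      · rw [if_pos (hiff.2 hm), if_pos hm]
      · rw [if_neg (fun h => hm (hiff.1 h)), if_neg hm]
    · have hnm : Tr.mk δ B δ'' ∉ Λ.Hcut [a] ξ := by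
        intro h
        obtain ⟨e1, e2, e3, -⟩ := (mem_Hcut_iff hls hξ a).1 h
        exact hcond ⟨e1, e2, e3⟩
      simp [LblSp.charOf, LblSp.PhiMap, LblSp.PhiTgt, if_neg hcond, hnm]

lemma charOf_gluSet {η : Set (Tr V A)} (a : A) :
    Λ.charOf (Λ.gluSet a η) = Λ.PsiMap a (Λ.charOf η) := by
  funext t
  cases t with
  | zero =>
    have : Tr.zero ∉ Λ.gluSet a η := by
      rintro (⟨δ, D, heq, -⟩ | ⟨B, heq, -⟩) <;> cases heq
    simp [LblSp.charOf, LblSp.PsiMap, LblSp.PsiTgt, this]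
  | mk w B δ'' =>
    rcases w with _ | ⟨b, δ⟩
    · by_cases hcond : δ'' = [] ∧ B ∈ Λ.𝒜
      · have hiff : (Tr.mk [] B δ'' ∈ Λ.gluSet a η) ↔
            (Tr.mk [] (Λ.relRange B [a]) [] ∈ η) := by
          rw [nil_mem_gluSet_iff]
          exact ⟨fun h => h.2.2, fun h => ⟨hcond.1, hcond.2, h⟩⟩
        simp only [LblSp.PsiMap, LblSp.PsiTgt, if_pos hcond, Option.map_some,
          Option.getD_some, LblSp.charOf]
        by_cases hm : Tr.mk [] (Λ.relRange B [a]) [] ∈ η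
        · rw [if_pos (hiff.2 hm), if_pos hm]
        · rw [if_neg (fun h => hm (hiff.1 h)), if_neg hm]
      · have hnm : Tr.mk [] B δ'' ∉ Λ.gluSet a η := by
          intro h
          obtain ⟨e1, e2, -⟩ := nil_mem_gluSet_iff.1 h
          exact hcond ⟨e1, e2⟩
        simp [LblSp.charOf, LblSp.PsiMap, LblSp.PsiTgt, if_neg hcond, hnm]
    · by_cases hcond : b = a ∧ δ'' = b :: δ ∧ B ⊆ Λ.rangeL (a :: δ)
      · have htgt : Λ.PsiTgt a (Tr.mk (b :: δ) B δ'') = some (Tr.mk δ B δ) := by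
          simp only [LblSp.PsiTgt]
          rw [if_pos hcond]
        have hiff : (Tr.mk (b :: δ) B δ'' ∈ Λ.gluSet a η) ↔ (Tr.mk δ B δ ∈ η) := by
          obtain ⟨hb, hc2, hc3⟩ := hcond
          rw [hb] at hc2 ⊢
          rw [cons_mem_gluSet_iff]
          exact ⟨fun h => h.2.1, fun h => ⟨hc2, h, hc3⟩⟩
        simp only [LblSp.PsiMap, htgt, Option.map_some, Option.getD_some,
          LblSp.charOf]
        by_cases hm : Tr.mk δ B δ ∈ η
        · rw [if_pos (hiff.2 hm), if_pos hm]
        · rw [if_neg (fun h => hm (hiff.1 h)), if_neg hm]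
      · have hnm : Tr.mk (b :: δ) B δ'' ∉ Λ.gluSet a η := by
          intro h
          rcases h with ⟨δ₀, D₀, heq, h1, h2⟩ | ⟨B₀, heq, -⟩
          · rw [Tr.mk.injEq] at heq
            obtain ⟨e1, e2, e3⟩ := heq
            have eb : b = a := by injection e1
            have eδ : δ = δ₀ := by injection e1
            rw [← eδ] at h2 e3
            rw [← e2] at h2
            rw [← eb] at e3
            exact hcond ⟨eb, e3, h2⟩
          · exact absurd (by injection heq) (List.cons_ne_nil b δ)
        have htgt : Λ.PsiTgt a (Tr.mk (b :: δ) B δ'') = none := by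
          simp only [LblSp.PsiTgt]
          rw [if_neg hcond]
        simp [LblSp.charOf, LblSp.PsiMap, htgt, hnm]

lemma continuous_phiMap (a : A) : Continuous (Λ.PhiMap a) := by
  apply continuous_pi
  intro t
  cases h : Λ.PhiTgt a t with
  | none =>
    have : (fun φ : Tr V A → Bool => Λ.PhiMap a φ t) = fun _ => false := by
      funext φ; simp [LblSp.PhiMap, h]
    rw [this]; exact continuous_const
  | some c =>
    have : (fun φ : Tr V A → Bool => Λ.PhiMap a φ t) = fun φ => φ c := by
      funext φ; simp [LblSp.PhiMap, h]
    rw [this]; exact continuous_apply c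

lemma continuous_psiMap (a : A) : Continuous (Λ.PsiMap a) := by
  apply continuous_pi
  intro t
  cases h : Λ.PsiTgt a t with
  | none =>
    have : (fun φ : Tr V A → Bool => Λ.PsiMap a φ t) = fun _ => false := by
      funext φ; simp [LblSp.PsiMap, h]
    rw [this]; exact continuous_const
  | some c =>
    have : (fun φ : Tr V A → Bool => Λ.PsiMap a φ t) = fun φ => φ c := by
      funext φ; simp [LblSp.PsiMap, h]
    rw [this]; exact continuous_apply c

lemma isOpen_eval (e : Tr V A) : IsOpen {φ : Tr V A → Bool | φ e = true} := by
  have : {φ : Tr V A → Bool | φ e = true} =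
      (fun φ : Tr V A → Bool => φ e) ⁻¹' {true} := rfl
  rw [this]
  exact (continuous_apply e).isOpen_preimage _ (isOpen_discrete _)

lemma tight_of_hcut (hN : Λ.IsNormal) {ξ : Set (Tr V A)} (ht : Λ.IsTightFilter ξ)
    {a : A} (ha : Tr.mk [a] (Λ.rangeL [a]) [a] ∈ ξ) :
    Λ.IsTightFilter (Λ.Hcut [a] ξ) := by
  have hls : Λ.IsLS := hN.toIsWLR.toIsLS
  have hξ : Λ.IsFilterES ξ := ht.1
  have hF : Λ.IsFilterES (Λ.Hcut [a] ξ) := hcut_isFilter hN hξ ha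
  refine ⟨hF, isChar_charOf hF, ?_⟩
  set U : Set (Tr V A → Bool) := {φ | ∃ ζ, Λ.IsUltraES ζ ∧ φ = Λ.charOf ζ} with hU
  set O : Set (Tr V A → Bool) :=
    {φ | φ (Tr.mk [a] (Λ.rangeL [a]) [a]) = true} with hO
  have h1 : Λ.charOf ξ ∈ closure U := ht.2.2
  have hOopen : IsOpen O := isOpen_eval _
  have hmemO : Λ.charOf ξ ∈ O := charOf_eq_true.2 ha
  have h2 : Λ.charOf ξ ∈ closure (O ∩ U) := hOopen.inter_closure ⟨hmemO, h1⟩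
  have h3 : Λ.PhiMap a (Λ.charOf ξ) ∈ closure (Λ.PhiMap a '' (O ∩ U)) :=
    image_closure_subset_closure_image (continuous_phiMap a) ⟨_, h2, rfl⟩
  have h4 : Λ.PhiMap a '' (O ∩ U) ⊆ U := by
    rintro _ ⟨φ, ⟨hφO, ζ, hζu, rfl⟩, rfl⟩
    have haζ : Tr.mk [a] (Λ.rangeL [a]) [a] ∈ ζ := charOf_eq_true.1 hφO
    exact ⟨Λ.Hcut [a] ζ, hcut_isUltra hN hζu haζ, (charOf_Hcut hls hζu.1 a).symm⟩
  rw [charOf_Hcut hls hξ a]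
  exact closure_mono h4 h3

lemma tight_of_glu (hN : Λ.IsNormal) {η : Set (Tr V A)} (ht : Λ.IsTightFilter η)
    {a : A} (h0 : Tr.mk [] (Λ.rangeL [a]) [] ∈ η) :
    Λ.IsTightFilter (Λ.gluSet a η) := by
  have hη : Λ.IsFilterES η := ht.1
  have hF : Λ.IsFilterES (Λ.gluSet a η) := glu_isFilter hN hη h0
  refine ⟨hF, isChar_charOf hF, ?_⟩
  set U : Set (Tr V A → Bool) := {φ | ∃ ζ, Λ.IsUltraES ζ ∧ φ = Λ.charOf ζ} with hU
  set O : Set (Tr V A → Bool) :=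
    {φ | φ (Tr.mk [] (Λ.rangeL [a]) []) = true} with hO
  have h1 : Λ.charOf η ∈ closure U := ht.2.2
  have hOopen : IsOpen O := isOpen_eval _
  have hmemO : Λ.charOf η ∈ O := charOf_eq_true.2 h0
  have h2 : Λ.charOf η ∈ closure (O ∩ U) := hOopen.inter_closure ⟨hmemO, h1⟩
  have h3 : Λ.PsiMap a (Λ.charOf η) ∈ closure (Λ.PsiMap a '' (O ∩ U)) :=
    image_closure_subset_closure_image (continuous_psiMap a) ⟨_, h2, rfl⟩
  have h4 : Λ.PsiMap a '' (O ∩ U) ⊆ U := by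
    rintro _ ⟨φ, ⟨hφO, ζ, hζu, rfl⟩, rfl⟩
    have h0ζ : Tr.mk [] (Λ.rangeL [a]) [] ∈ ζ := charOf_eq_true.1 hφO
    exact ⟨Λ.gluSet a ζ, glu_isUltra hN hζu h0ζ, (charOf_gluSet a).symm⟩
  rw [charOf_gluSet a]
  exact closure_mono h4 h3

end AuxChar

section AuxWord

variable {Λ : LblSp V Ed A}

lemma word_prefix_mem (hls : Λ.IsLS) {ξ : Set (Tr V A)} (hξ : Λ.IsFilterES ξ)
    {β : List A} {B : Set V} {γ : List A} (hp : Tr.mk β B β ∈ ξ) (hγne : γ ≠ [])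
    (hpre : γ <+: β) : Tr.mk γ (Λ.rangeL γ) γ ∈ ξ := by
  obtain ⟨-, hβL, -, hBr, hBne⟩ := mk_mem_shape hξ hp
  have hrβ : (Λ.rangeL β).Nonempty := by
    rcases hBne with ⟨x, hx⟩; exact ⟨x, hBr hx⟩
  have hrγ : (Λ.rangeL γ).Nonempty := prefix_rangeL_nonempty hpre hrβ
  refine mem_of_le hξ hp (mem_LStar_of_nonempty hrγ)
    (hls.range_mem _ (mem_LStar_of_nonempty hrγ) hγne) subset_rfl hpre ?_
  obtain ⟨d, rfl⟩ := hpre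
  rw [List.drop_left]
  intro x hx
  have h1 := hBr hx
  rw [LblSp.rangeL, relRange_append] at h1
  exact h1

lemma exists_word (hls : Λ.IsLS) {ξ : Set (Tr V A)} (hξ : Λ.IsFilterES ξ)
    {β₀ : List A} {B₀ : Set V} (h0 : Tr.mk β₀ B₀ β₀ ∈ ξ) (hβ₀ : β₀ ≠ []) :
    ∃ α : Word A, Λ.HasWord ξ α ∧ 1 ≤ wlength α := by
  classical
  set P : Set (List A) := {β | β ≠ [] ∧ ∃ B, Tr.mk β B β ∈ ξ} with hP
  have hβP : β₀ ∈ P := ⟨hβ₀, B₀, h0⟩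
  have hchain : ∀ β ∈ P, ∀ γ ∈ P, β <+: γ ∨ γ <+: β := by
    rintro β ⟨-, B, hB⟩ γ ⟨-, C, hC⟩
    rcases filt_prod hξ hB hC with ⟨h, -⟩ | ⟨h, -⟩
    exacts [Or.inl h, Or.inr h]
  have hdown : ∀ β ∈ P, ∀ γ, γ ≠ [] → γ <+: β → γ ∈ P := by
    rintro β ⟨hβne, B, hB⟩ γ hγne hpre
    exact ⟨hγne, _, word_prefix_mem hls hξ hB hγne hpre⟩
  by_cases hbdd : ∃ N, ∀ β ∈ P, β.length ≤ N
  · obtain ⟨N, hN⟩ := hbdd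
    set L : Set ℕ := {n | ∃ β ∈ P, β.length = n} with hL
    have hLne : L.Nonempty := ⟨β₀.length, β₀, hβP, rfl⟩
    have hLbd : BddAbove L := ⟨N, by rintro n ⟨β, hβ, rfl⟩; exact hN β hβ⟩
    obtain ⟨βs, hβsP, hβslen⟩ := Nat.sSup_mem hLne hLbd
    refine ⟨Sum.inl βs, ?_, ?_⟩
    · intro β hβne
      constructor
      · rintro ⟨B, hB⟩
        have hβP' : β ∈ P := ⟨hβne, B, hB⟩
        rcases hchain β hβP' βs hβsP with h | h
        · exact h
        · have hle : β.length ≤ sSup L := le_csSup hLbd ⟨β, hβP', rfl⟩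
          have heq : βs = β := h.eq_of_length
            (le_antisymm h.length_le (by rw [hβslen]; exact hle))
          show β <+: βs
          rw [← heq]
      · intro h
        obtain ⟨-, B, hB⟩ := hdown βs hβsP β hβne h
        exact ⟨B, hB⟩
    · have hne : βs ≠ [] := hβsP.1
      have hlen : 1 ≤ βs.length :=
        Nat.one_le_iff_ne_zero.2 (fun h => hne (List.length_eq_zero_iff.1 h))
      show (1 : ℕ∞) ≤ (βs.length : ℕ∞)
      exact_mod_cast hlen
  · push_neg at hbdd
    have hBig : ∀ n : ℕ, ∃ β, β ∈ P ∧ n < β.length := by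
      intro n
      obtain ⟨β, hβ, hlen⟩ := hbdd n
      exact ⟨β, hβ, hlen⟩
    choose g hgP hglen using hBig
    set f : ℕ → A := fun n => (g n)[n]'(hglen n) with hf
    have hagree : ∀ β ∈ P, ∀ i, ∀ h : i < β.length, β[i]'h = f i := by
      intro β hβ i hi
      have hi' : i < (g i).length := hglen i
      rcases hchain β hβ (g i) (hgP i) with h | h
      · exact h.getElem hi
      · exact (h.getElem hi').symm
    refine ⟨Sum.inr f, ?_, le_top⟩
    intro β hβne
    constructor
    · rintro ⟨B, hB⟩
      have hβP' : β ∈ P := ⟨hβne, B, hB⟩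
      show β = List.ofFn fun i : Fin β.length => f i
      refine List.ext_getElem (by simp) ?_
      intro n h1 h2
      rw [List.getElem_ofFn]
      exact hagree β hβP' n h1
    · intro h
      have hlt : β.length < (g β.length).length := hglen _
      have hpre : β <+: g β.length := by
        rw [List.prefix_iff_eq_take]
        refine List.ext_getElem ?_ ?_
        · rw [List.length_take]
          omega
        · intro n h1 h2
          have hn : n < (g β.length).length := by omega
          have e1 : β[n]'h1 = f n := by
            rw [List.getElem_of_eq h h1, List.getElem_ofFn]
          have e2 : (g β.length)[n]'hn = f n := hagree _ (hgP _) n hn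
          rw [List.getElem_take]
          exact e1.trans e2.symm
      obtain ⟨-, B, hB⟩ := hdown (g β.length) (hgP _) β hβne hpre
      exact ⟨B, hB⟩

end AuxWord

section AuxTop

variable {Λ : LblSp V Ed A}

lemma TightT.ext' {x y : Λ.TightT} (h : x.carrier = y.carrier) : x = y := by
  cases x; cases y
  cases h
  rfl

lemma isOpen_V (e : Tr V A) : IsOpen {ξ : Λ.TightT | e ∈ ξ.carrier} := by
  have hrw : {ξ : Λ.TightT | e ∈ ξ.carrier} =
      (fun ξ : Λ.TightT => Λ.charOf ξ.carrier) ⁻¹' {φ | φ e = true} := by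
    ext ξ
    simp only [Set.mem_setOf_eq, Set.mem_preimage]
    exact ⟨fun h => charOf_eq_true.2 h, fun h => charOf_eq_true.1 h⟩
  rw [hrw]
  exact (isOpen_eval e).preimage continuous_induced_dom

end AuxTop

/-- (i) `T^{(1)} = {ξ^α ∈ T : |α| ≥ 1}` is open in `T`, and equals
`⋃_{a ∈ A} V_{(a, r(a), a)}`; (ii) the shift `σ(ξ^{aγ}) = H_{[a]γ}(ξ^{aγ})` is a local
homeomorphism: for each letter `a`, its restriction to `V_{(a, r(a), a)}` is a
homeomorphism onto `V_{(ω, r(a), ω)}`. -/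
theorem statement_5 (hΛ : Λ.IsNormal) :
    IsOpen {ξ : Λ.TightT | ∃ α : Word A, Λ.HasWord ξ.carrier α ∧ 1 ≤ wlength α} ∧
    ({ξ : Λ.TightT | ∃ α : Word A, Λ.HasWord ξ.carrier α ∧ 1 ≤ wlength α} =
      ⋃ a : A, {ξ : Λ.TightT | Tr.mk [a] (Λ.rangeL [a]) [a] ∈ ξ.carrier}) ∧
    ∀ a : A, ∃ e : {ξ : Λ.TightT // Tr.mk [a] (Λ.rangeL [a]) [a] ∈ ξ.carrier} ≃ₜ
        {ξ : Λ.TightT // Tr.mk [] (Λ.rangeL [a]) [] ∈ ξ.carrier},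
      ∀ ξ, (e ξ).val.carrier = Λ.Hcut [a] ξ.val.carrier := by
  have hls : Λ.IsLS := hΛ.toIsWLR.toIsLS
  have hpart2 : {ξ : Λ.TightT | ∃ α : Word A, Λ.HasWord ξ.carrier α ∧ 1 ≤ wlength α} =
      ⋃ a : A, {ξ : Λ.TightT | Tr.mk [a] (Λ.rangeL [a]) [a] ∈ ξ.carrier} := by
    ext ξ
    simp only [Set.mem_setOf_eq, Set.mem_iUnion]
    constructor
    · rintro ⟨α, hw, hlen⟩
      have hfil : Λ.IsFilterES ξ.carrier := ξ.tight.1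
      obtain ⟨b, hWp⟩ : ∃ b : A, WPrefix [b] α := by
        cases α with
        | inl l =>
          cases l with
          | nil =>
            exfalso
            simp only [wlength, Sum.elim_inl, List.length_nil, Nat.cast_zero] at hlen
            exact absurd hlen (by simp)
          | cons b l' =>
            exact ⟨b, List.cons_prefix_cons.2 ⟨rfl, List.nil_prefix⟩⟩
        | inr f =>
          refine ⟨f 0, ?_⟩
          show ([f 0] : List A) = List.ofFn fun i : Fin ([f 0] : List A).length => f i
          simp
      obtain ⟨B, hB⟩ := (hw [b] (by simp)).2 hWp
      obtain ⟨-, -, -, hBr, -⟩ := mk_mem_shape hfil hB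
      exact ⟨b, mem_of_superset hfil hB (rangeL_singleton_mem hls b) hBr subset_rfl⟩
    · rintro ⟨a, ha⟩
      exact exists_word hls ξ.tight.1 ha (by simp)
  refine ⟨?_, hpart2, ?_⟩
  · rw [hpart2]
    exact isOpen_iUnion (fun a => isOpen_V _)
  · intro a
    refine ⟨⟨⟨fun ξ => ⟨⟨Λ.Hcut [a] ξ.val.carrier, tight_of_hcut hΛ ξ.val.tight ξ.prop⟩,
        e0_mem_Hcut hls ξ.val.tight.1 ξ.prop⟩,
      fun η => ⟨⟨Λ.gluSet a η.val.carrier, tight_of_glu hΛ η.val.tight η.prop⟩,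
        ea_mem_gluSet η.prop⟩,
      fun ξ => Subtype.ext (TightT.ext' (glu_hcut hΛ ξ.val.tight.1 ξ.prop)),
      fun η => Subtype.ext (TightT.ext' (hcut_glu hΛ η.val.tight.1 η.prop))⟩,
      ?_, ?_⟩, fun ξ => rfl⟩
    · apply Continuous.subtype_mk
      apply continuous_induced_rng.2
      have hfe : (fun (ξ : {ξ : Λ.TightT // Tr.mk [a] (Λ.rangeL [a]) [a] ∈ ξ.carrier}) =>
          Λ.charOf (Λ.Hcut [a] ξ.val.carrier)) =
          fun ξ => Λ.PhiMap a (Λ.charOf ξ.val.carrier) :=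
        funext fun ξ => charOf_Hcut hls ξ.val.tight.1 a
      show Continuous fun ξ : {ξ : Λ.TightT // Tr.mk [a] (Λ.rangeL [a]) [a] ∈ ξ.carrier} =>
        Λ.charOf (Λ.Hcut [a] ξ.val.carrier)
      rw [hfe]
      have hc : Continuous ((fun ξ : Λ.TightT => Λ.charOf ξ.carrier) ∘
          (Subtype.val : {ξ : Λ.TightT //
            Tr.mk [a] (Λ.rangeL [a]) [a] ∈ ξ.carrier} → Λ.TightT)) :=
        continuous_induced_dom.comp continuous_subtype_val
      exact (continuous_phiMap a).comp hc
    · apply Continuous.subtype_mk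
      apply continuous_induced_rng.2
      have hfe : (fun (η : {ξ : Λ.TightT // Tr.mk [] (Λ.rangeL [a]) [] ∈ ξ.carrier}) =>
          Λ.charOf (Λ.gluSet a η.val.carrier)) =
          fun η => Λ.PsiMap a (Λ.charOf η.val.carrier) :=
        funext fun η => charOf_gluSet a
      show Continuous fun η : {ξ : Λ.TightT // Tr.mk [] (Λ.rangeL [a]) [] ∈ ξ.carrier} =>
        Λ.charOf (Λ.gluSet a η.val.carrier)
      rw [hfe]
      have hc : Continuous ((fun ξ : Λ.TightT => Λ.charOf ξ.carrier) ∘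
          (Subtype.val : {ξ : Λ.TightT //
            Tr.mk [] (Λ.rangeL [a]) [] ∈ ξ.carrier} → Λ.TightT)) :=
        continuous_induced_dom.comp continuous_subtype_val
      exact (continuous_psiMap a).comp hc

end LblSp
end
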